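/- arXiv:1302.0930 — 9 statements merged into one kernel-verified Lean document; each statement's English description precedes it below -/
import Mathlib

section
/- Let C ⊆ B be ℤⁿ-graded commutative k-algebras which are integral domains, with C a graded subalgebra of B (i.e., C_χ = C ∩ B_χ for all χ), and suppose B is integral over C. Then for every χ ∈ ℤⁿ with B_χ ≠ 0 there exists an integer i ≥ 1 with C_{iχ} ≠ 0. Consequently the ℚ_{≥0}-cones in ℚⁿ generated by the weight sets Σ_B and Σ_C coincide. -/
/-- The canonical embedding `ℤⁿ → ℚⁿ`. -/
def embQ {n : ℕ} (χ : Fin n → ℤ) : Fin n → ℚ := fun i => (χ i : ℚ)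

/-- The `ℚ≥0`-cone generated by a subset of `ℚⁿ`. -/
def coneGen {n : ℕ} (S : Set (Fin n → ℚ)) : Set (Fin n → ℚ) :=
  {x | ∃ (t : Finset (Fin n → ℚ)) (c : (Fin n → ℚ) → ℚ),
    (t : Set (Fin n → ℚ)) ⊆ S ∧ (∀ v ∈ t, 0 ≤ c v) ∧ x = ∑ v ∈ t, c v • v}

lemma coneGen_mono {n : ℕ} {S T : Set (Fin n → ℚ)} (h : S ⊆ T) :
    coneGen S ⊆ coneGen T := by
  rintro x ⟨t, c, hts, hc, rfl⟩
  exact ⟨t, c, hts.trans h, hc, rfl⟩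

lemma smul_mem_coneGen {n : ℕ} {S : Set (Fin n → ℚ)} {v : Fin n → ℚ}
    (hv : v ∈ S) {a : ℚ} (ha : 0 ≤ a) : a • v ∈ coneGen S := by
  refine ⟨{v}, fun _ => a, ?_, fun _ _ => ha, by simp⟩
  simpa using hv

lemma add_mem_coneGen {n : ℕ} {S : Set (Fin n → ℚ)} {x y : Fin n → ℚ}
    (hx : x ∈ coneGen S) (hy : y ∈ coneGen S) : x + y ∈ coneGen S := by
  obtain ⟨t, c, hts, hc, rfl⟩ := hx
  obtain ⟨t', c', hts', hc', rfl⟩ := hy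
  refine ⟨t ∪ t', fun v => (if v ∈ t then c v else 0) + (if v ∈ t' then c' v else 0),
    ?_, ?_, ?_⟩
  · intro v hv
    rcases Finset.mem_union.1 hv with h | h
    · exact hts h
    · exact hts' h
  · intro v _
    have h1 : (0:ℚ) ≤ if v ∈ t then c v else 0 := by
      split_ifs with h; exacts [hc v h, le_rfl]
    have h2 : (0:ℚ) ≤ if v ∈ t' then c' v else 0 := by
      split_ifs with h; exacts [hc' v h, le_rfl]
    exact add_nonneg h1 h2
  · have e1 : ∑ v ∈ t ∪ t', (if v ∈ t then c v else 0) • v = ∑ v ∈ t, c v • v := by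
      rw [← Finset.sum_subset (Finset.subset_union_left)]
      · exact Finset.sum_congr rfl fun v hv => by rw [if_pos hv]
      · intro v _ hv; rw [if_neg hv, zero_smul]
    have e2 : ∑ v ∈ t ∪ t', (if v ∈ t' then c' v else 0) • v = ∑ v ∈ t', c' v • v := by
      rw [← Finset.sum_subset (Finset.subset_union_right)]
      · exact Finset.sum_congr rfl fun v hv => by rw [if_pos hv]
      · intro v _ hv; rw [if_neg hv, zero_smul]
    rw [← e1, ← e2, ← Finset.sum_add_distrib]
    exact (Finset.sum_congr rfl fun v _ => by rw [add_smul]).symm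

lemma coneGen_subset_of {n : ℕ} {S T : Set (Fin n → ℚ)}
    (h : ∀ v ∈ S, v ∈ coneGen T) : coneGen S ⊆ coneGen T := by
  rintro x ⟨t, c, hts, hc, rfl⟩
  refine Finset.sum_induction _ (· ∈ coneGen T)
    (fun a b ha hb => add_mem_coneGen ha hb) ⟨∅, fun _ => 0, by simp, by simp, by simp⟩
    fun v hv => ?_
  obtain ⟨t', c', hts', hc', he⟩ := h v (hts hv)
  exact ⟨t', fun w => c v * c' w, hts', fun w hw => mul_nonneg (hc v hv) (hc' w hw),
    by rw [he, Finset.smul_sum]; exact Finset.sum_congr rfl fun w _ => (mul_smul _ _ _).symm⟩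

/-- if `C ⊆ B` are `ℤⁿ`-graded integral domains over `k`, with `C` a graded
subalgebra of `B` and `B` integral over `C`, then for every `χ` with `B_χ ≠ 0` there is
`i ≥ 1` with `C_{iχ} ≠ 0`; consequently the weight cones of `B` and `C` coincide. -/
theorem weight_cone_eq_of_integral
    (k : Type) [Field k] [IsAlgClosed k] [CharZero k] {n : ℕ}
    (B : Type) [CommRing B] [IsDomain B] [Algebra k B]
    (ℬ : (Fin n → ℤ) → Submodule k B) [GradedAlgebra ℬ]
    (C : Subalgebra k B)
    (hgraded : ∀ (χ : Fin n → ℤ) (b : B), b ∈ C → (DirectSum.decompose ℬ b χ : B) ∈ C)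
    (hintegral : ∀ b : B, IsIntegral C b) :
    (∀ χ : Fin n → ℤ, ℬ χ ≠ ⊥ → ∃ i : ℕ, 1 ≤ i ∧ ∃ c ∈ C, c ≠ 0 ∧ c ∈ ℬ (i • χ)) ∧
    coneGen (embQ '' {χ : Fin n → ℤ | ℬ χ ≠ ⊥}) =
      coneGen (embQ '' {χ : Fin n → ℤ | ∃ c ∈ C, c ≠ 0 ∧ c ∈ ℬ χ}) := by
  have main : ∀ χ : Fin n → ℤ, ℬ χ ≠ ⊥ →
      ∃ i : ℕ, 1 ≤ i ∧ ∃ c ∈ C, c ≠ 0 ∧ c ∈ ℬ (i • χ) := by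
    intro χ hχ
    obtain ⟨b, hb, hbne⟩ := Submodule.exists_mem_ne_zero_of_ne_bot hχ
    obtain ⟨p, hmonic, heval⟩ := hintegral b
    set m := p.natDegree with hm
    have hm1 : 1 ≤ m := by
      by_contra h
      push_neg at h
      interval_cases m
      · have : p = 1 := (Polynomial.Monic.natDegree_eq_zero hmonic).1 hm.symm
        rw [this] at heval
        simp at heval
    -- d j : component of coeff j in degree (m-j)•χ
    set d : ℕ → B := fun j =>
      (DirectSum.decompose ℬ ((p.coeff j : B)) ((m - j) • χ) : B) with hd
    have key : ∀ j ≤ m,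
        (DirectSum.decompose ℬ ((p.coeff j : B) * b ^ j) (m • χ) : B) = d j * b ^ j := by
      intro j hj
      have hpow : b ^ j ∈ ℬ (j • χ) := SetLike.pow_mem_graded j hb
      have hsplit : m • χ = (m - j) • χ + j • χ := by
        rw [← add_nsmul, Nat.sub_add_cancel hj]
      rw [hsplit]
      exact DirectSum.coe_decompose_mul_add_of_right_mem ℬ hpow
    have heq : (0 : B) = ∑ j ∈ Finset.range (m + 1), d j * b ^ j := by
      have h0 : (0 : B) = ∑ j ∈ Finset.range (m + 1), (p.coeff j : B) * b ^ j := by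
        rw [← heval, Polynomial.eval₂_eq_sum_range]
        rfl
      calc (0 : B) = (DirectSum.decompose ℬ (0 : B) (m • χ) : B) := by simp
        _ = ∑ j ∈ Finset.range (m + 1),
              (DirectSum.decompose ℬ ((p.coeff j : B) * b ^ j) (m • χ) : B) := by
            rw [h0]
            rw [DirectSum.decompose_sum, DFinsupp.finset_sum_apply,
              AddSubmonoidClass.coe_finset_sum]
        _ = ∑ j ∈ Finset.range (m + 1), d j * b ^ j := by
            refine Finset.sum_congr rfl fun j hj => ?_
            exact key j (Nat.lt_succ_iff.1 (Finset.mem_range.1 hj))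
    have hdm : d m = 1 := by
      have hc1 : ((p.coeff m : C) : B) = 1 := by
        rw [show p.coeff m = 1 from hmonic.coeff_natDegree, OneMemClass.coe_one]
      show (DirectSum.decompose ℬ ((p.coeff m : C) : B) ((m - m) • χ) : B) = 1
      rw [hc1, Nat.sub_self, zero_smul]
      exact DirectSum.decompose_of_mem_same ℬ (SetLike.one_mem_graded ℬ)
    rw [Finset.sum_range_succ, hdm, one_mul] at heq
    have hne : ∃ j ∈ Finset.range m, d j * b ^ j ≠ 0 := by
      by_contra h
      push_neg at h
      rw [Finset.sum_eq_zero h, zero_add] at heq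
      exact pow_ne_zero m hbne heq.symm
    obtain ⟨j, hjm, hdj⟩ := hne
    rw [Finset.mem_range] at hjm
    refine ⟨m - j, Nat.le_sub_of_add_le (by omega), d j, ?_, ?_, ?_⟩
    · exact hgraded _ _ (p.coeff j).2
    · intro h; rw [h, zero_mul] at hdj; exact hdj rfl
    · exact Submodule.coe_mem _
  refine ⟨main, ?_⟩
  apply le_antisymm
  · refine coneGen_subset_of ?_
    rintro v ⟨χ, hχ, rfl⟩
    obtain ⟨i, hi1, c, hcC, hc0, hcχ⟩ := main χ hχ
    have hmem : embQ (i • χ) ∈ embQ '' {χ : Fin n → ℤ | ∃ c ∈ C, c ≠ 0 ∧ c ∈ ℬ χ} :=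
      ⟨i • χ, ⟨c, hcC, hc0, hcχ⟩, rfl⟩
    have hiQ : (0:ℚ) < (i : ℚ) := by exact_mod_cast hi1
    have : embQ χ = (1 / (i:ℚ)) • embQ (i • χ) := by
      funext x
      simp only [embQ, Pi.smul_apply, smul_eq_mul, Pi.smul_apply]
      field_simp
      rw [nsmul_eq_mul]; push_cast; ring
    rw [this]
    exact smul_mem_coneGen hmem (by positivity)
  · refine coneGen_mono (Set.image_mono ?_)
    rintro χ ⟨c, _, hc0, hcχ⟩ h
    rw [h] at hcχ
    exact hc0 (by simpa using hcχ)
end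

section
/- Let (B, φ) be an affine stable toric variety over A. Then for every χ ∈ Σ̂_A there exists an integer m ≥ 1 such that φ(A_{mχ}) = B_{mχ}; that is, the one-dimensional component B_{mχ} is contained in the image of φ. -/
/-- The saturation of the weight set of a `ℤⁿ`-graded algebra:
`Σ̂_A = {χ | mχ ∈ Σ_A for some m > 0}`. -/
def satWeightSet {k A : Type} [CommSemiring k] [Semiring A] [Module k A] {n : ℕ}
    (𝒜 : (Fin n → ℤ) → Submodule k A) : Set (Fin n → ℤ) :=
  {χ | ∃ m : ℕ, 0 < m ∧ 𝒜 (m • χ) ≠ ⊥}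

/-- `(B, φ)` is an affine stable toric variety over the graded algebra `(A, 𝒜)`:
`B` is a reduced `ℤⁿ`-graded `k`-algebra with `dim_k B_χ = 1` for `χ ∈ Σ̂_A` and `B_χ = 0`
otherwise, and `φ : A → B` is a graded `k`-algebra homomorphism making `B` a finitely
generated `A`-module. -/
def IsASTV {k : Type} [Field k] {n : ℕ}
    {A : Type} [CommRing A] [Algebra k A] (𝒜 : (Fin n → ℤ) → Submodule k A)
    {B : Type} [CommRing B] [Algebra k B] (ℬ : (Fin n → ℤ) → Submodule k B)
    (φ : A →ₐ[k] B) : Prop :=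
  IsReduced B ∧
  (∀ (χ : Fin n → ℤ) (a : A), a ∈ 𝒜 χ → φ a ∈ ℬ χ) ∧
  (∀ χ ∈ satWeightSet 𝒜, Module.finrank k (ℬ χ) = 1) ∧
  (∀ χ ∉ satWeightSet 𝒜, ℬ χ = ⊥) ∧
  (∃ s : Finset B, ∀ b : B, ∃ c : B → A, b = ∑ x ∈ s, φ (c x) * x)

/-- The orbit cone of a maximal ideal `𝔪 ⊆ A`: the `ℚ≥0`-cone generated by the weights `χ`
for which some `f ∈ A_χ` does not lie in `𝔪`. -/
def orbitCone {k : Type} [Field k] {n : ℕ} {A : Type} [CommRing A] [Algebra k A]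
    (𝒜 : (Fin n → ℤ) → Submodule k A) (𝔪 : Ideal A) : Set (Fin n → ℚ) :=
  coneGen (embQ '' {χ : Fin n → ℤ | ∃ f ∈ 𝒜 χ, f ∉ 𝔪})

/-- The GIT-cone of a character `ψ`: the intersection of all orbit cones containing `ψ`. -/
def GITCone {k : Type} [Field k] {n : ℕ} {A : Type} [CommRing A] [Algebra k A]
    (𝒜 : (Fin n → ℤ) → Submodule k A) (ψ : Fin n → ℤ) : Set (Fin n → ℚ) :=
  ⋂ 𝔪 ∈ {𝔪 : Ideal A | 𝔪.IsMaximal ∧ embQ ψ ∈ orbitCone 𝒜 𝔪}, orbitCone 𝒜 𝔪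

section Aux

open DirectSum

variable {k : Type} [Field k] {n : ℕ}
    {A : Type} [CommRing A] [Algebra k A] (𝒜 : (Fin n → ℤ) → Submodule k A) [GradedAlgebra 𝒜]
    {B : Type} [CommRing B] [Algebra k B] (ℬ : (Fin n → ℤ) → Submodule k B) [GradedAlgebra ℬ]
    (φ : A →ₐ[k] B)

/-- A graded algebra map commutes with taking graded components. -/
theorem decompose_map_aux (hgr : ∀ (χ : Fin n → ℤ) (a : A), a ∈ 𝒜 χ → φ a ∈ ℬ χ)
    (γ : Fin n → ℤ) (a : A) :
    (DirectSum.decompose ℬ (φ a) γ : B) = φ (DirectSum.decompose 𝒜 a γ : A) := by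
  induction a using DirectSum.Decomposition.inductionOn 𝒜 with
  | zero => simp
  | homogeneous m =>
    rename_i δ
    by_cases hδ : δ = γ
    · subst hδ
      rw [DirectSum.decompose_of_mem_same ℬ (hgr δ m m.2),
        DirectSum.decompose_of_mem_same 𝒜 m.2]
    · rw [DirectSum.decompose_of_mem_ne ℬ (hgr δ m m.2) hδ,
        DirectSum.decompose_of_mem_ne 𝒜 m.2 hδ, map_zero]
  | add x y hx hy =>
    rw [map_add, DirectSum.decompose_add, DirectSum.decompose_add]
    simp only [DirectSum.add_apply, Submodule.coe_add, hx, hy, map_add]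

end Aux

/-- for an affine stable toric variety `(B, φ)` over `A` and `χ ∈ Σ̂_A` there
exists `m ≥ 1` with `φ(A_{mχ}) = B_{mχ}`. -/
theorem component_in_image_of_power
    (k : Type) [Field k] [IsAlgClosed k] [CharZero k] {n : ℕ}
    (A : Type) [CommRing A] [IsDomain A] [Algebra k A]
    (𝒜 : (Fin n → ℤ) → Submodule k A) [GradedAlgebra 𝒜]
    (hfg : Algebra.FiniteType k A)
    (B : Type) [CommRing B] [Algebra k B]
    (ℬ : (Fin n → ℤ) → Submodule k B) [GradedAlgebra ℬ]
    (φ : A →ₐ[k] B) (hastv : IsASTV 𝒜 ℬ φ)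
    (χ : Fin n → ℤ) (hχ : χ ∈ satWeightSet 𝒜) :
    ∃ m : ℕ, 1 ≤ m ∧ Submodule.map φ.toLinearMap (𝒜 (m • χ)) = ℬ (m • χ) := by
  obtain ⟨hred, hgr, hdim1, hzero, s, hs⟩ := hastv
  haveI := hred
  -- `m • χ ∈ Σ̂_A` for all `m ≥ 1`.
  have hsat : ∀ m : ℕ, 0 < m → (m • χ) ∈ satWeightSet 𝒜 := by
    intro m hm
    obtain ⟨m', hm', hA⟩ := hχ
    obtain ⟨x, hx, hx0⟩ := Submodule.ne_bot_iff _ |>.1 hA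
    refine ⟨m', hm', Submodule.ne_bot_iff _ |>.2 ⟨x ^ m, ?_, pow_ne_zero m hx0⟩⟩
    have := SetLike.pow_mem_graded m hx
    rwa [smul_comm] at this
  -- pick a nonzero `b ∈ B_χ`
  have hBχ : ℬ χ ≠ ⊥ := by
    intro h
    have := hdim1 χ hχ
    rw [h] at this
    simp at this
  obtain ⟨b, hb, hb0⟩ := Submodule.ne_bot_iff _ |>.1 hBχ
  -- `B` is a finite `A`-module via `φ`, hence `b` is integral over `A`.
  have hfin : (φ : A →+* B).Finite := by
    letI : Algebra A B := (φ : A →+* B).toAlgebra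
    refine Module.finite_def.2 ?_
    refine ⟨s, le_antisymm le_top fun y _ => ?_⟩
    obtain ⟨c, rfl⟩ := hs y
    refine Submodule.sum_mem _ fun x hx => ?_
    have : φ (c x) * x = c x • x := by
      rw [Algebra.smul_def, RingHom.algebraMap_toAlgebra]; rfl
    rw [this]
    exact Submodule.smul_mem _ _ (Submodule.subset_span hx)
  obtain ⟨p, hpm, hp⟩ := hfin.to_isIntegral b
  set N := p.natDegree with hN
  -- project the integral equation to degree `N • χ`
  rw [Polynomial.eval₂_eq_sum_range] at hp
  simp only [RingHom.coe_coe] at hp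
  set F : ℕ → B := fun i =>
    φ ((DirectSum.decompose 𝒜 (p.coeff i) ((N - i) • χ) : A)) * b ^ i with hF
  have hproj : ∀ i ∈ Finset.range (N + 1),
      (DirectSum.decompose ℬ (φ (p.coeff i) * b ^ i) (N • χ) : B) = F i := by
    intro i hi
    have hile : i ≤ N := Nat.lt_succ_iff.1 (Finset.mem_range.1 hi)
    have hdeg : (N - i) • χ + i • χ = N • χ := by
      rw [← add_smul, Nat.sub_add_cancel hile]
    rw [← hdeg, DirectSum.coe_decompose_mul_add_of_right_mem ℬ
      (SetLike.pow_mem_graded i hb), decompose_map_aux 𝒜 ℬ φ hgr]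
  have hsum : (0 : B) = ∑ i ∈ Finset.range (N + 1), F i := by
    calc (0 : B)
        = (DirectSum.decompose ℬ
            (∑ i ∈ Finset.range (N + 1), φ (p.coeff i) * b ^ i) (N • χ) : B) := by
          rw [hp]; simp
      _ = ∑ i ∈ Finset.range (N + 1),
            (DirectSum.decompose ℬ (φ (p.coeff i) * b ^ i) (N • χ) : B) := by
          rw [DirectSum.decompose_sum, DFinsupp.finset_sum_apply,
            AddSubmonoidClass.coe_finset_sum]
      _ = ∑ i ∈ Finset.range (N + 1), F i := Finset.sum_congr rfl hproj
  have hFN : F N = b ^ N := by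
    have h1 : (DirectSum.decompose 𝒜 (p.coeff N) ((N - N) • χ) : A) = 1 := by
      rw [Nat.sub_self, zero_smul, hpm.coeff_natDegree]
      exact DirectSum.decompose_of_mem_same 𝒜 (SetLike.one_mem_graded 𝒜)
    rw [hF]
    simp only [h1, map_one, one_mul]
  -- some lower-order coefficient has nonzero image
  have key : ∃ i < N,
      φ ((DirectSum.decompose 𝒜 (p.coeff i) ((N - i) • χ) : A)) ≠ 0 := by
    by_contra h
    push_neg at h
    have hz : ∀ i ∈ Finset.range N, F i = 0 := by
      intro i hi
      rw [hF]
      simp [h i (Finset.mem_range.1 hi)]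
    rw [Finset.sum_range_succ, Finset.sum_eq_zero hz, zero_add, hFN] at hsum
    exact hb0 (IsNilpotent.eq_zero ⟨N, hsum.symm⟩)
  obtain ⟨i, hiN, hne⟩ := key
  refine ⟨N - i, Nat.sub_pos_of_lt hiN, ?_⟩
  set a : A := (DirectSum.decompose 𝒜 (p.coeff i) ((N - i) • χ) : A) with ha
  have haM : a ∈ 𝒜 ((N - i) • χ) := SetLike.coe_mem _
  have hmem : (N - i) • χ ∈ satWeightSet 𝒜 := hsat _ (Nat.sub_pos_of_lt hiN)
  have hrk : Module.finrank k (ℬ ((N - i) • χ)) = 1 := hdim1 _ hmem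
  haveI : FiniteDimensional k (ℬ ((N - i) • χ)) :=
    Module.finite_of_finrank_pos (by rw [hrk]; norm_num)
  have hle : Submodule.map φ.toLinearMap (𝒜 ((N - i) • χ)) ≤ ℬ ((N - i) • χ) := by
    rintro _ ⟨a', ha', rfl⟩
    exact hgr _ _ ha'
  haveI : FiniteDimensional k (Submodule.map φ.toLinearMap (𝒜 ((N - i) • χ))) :=
    Submodule.finiteDimensional_of_le hle
  refine Submodule.eq_of_le_of_finrank_le hle ?_
  rw [hrk]
  have hnb : Submodule.map φ.toLinearMap (𝒜 ((N - i) • χ)) ≠ ⊥ :=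
    Submodule.ne_bot_iff _ |>.2 ⟨φ a, Submodule.mem_map_of_mem haM, hne⟩
  have : Nontrivial (Submodule.map φ.toLinearMap (𝒜 ((N - i) • χ))) :=
    Submodule.nontrivial_iff_ne_bot.2 hnb
  exact Module.finrank_pos_iff.2 this
end

section
/- There exists a positive integer N, depending only on A, such that for every affine stable toric variety (B, φ) over A and every χ ∈ Σ̂_A one has φ(A_{Nχ}) = B_{Nχ}; that is, the homogeneous component map φ_{Nχ} : A_{Nχ} → B_{Nχ} is surjective. -/
namespace ASTVaux

variable {n : ℕ}

lemma embQ_add (x y : Fin n → ℤ) : embQ (x + y) = embQ x + embQ y := by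
  funext i; simp [embQ]

lemma embQ_zero : embQ (0 : Fin n → ℤ) = 0 := by funext i; simp [embQ]

lemma embQ_nsmul (m : ℕ) (x : Fin n → ℤ) : embQ (m • x) = (m : ℚ) • embQ x := by
  funext i; simp [embQ]

lemma embQ_injective : Function.Injective (embQ (n := n)) := by
  intro x y h
  funext i
  have := congrFun h i
  simpa [embQ] using this

/-- ℤ-linear version of embQ. -/
def embL : (Fin n → ℤ) →ₗ[ℤ] (Fin n → ℚ) where
  toFun := embQ
  map_add' := embQ_add
  map_smul' := by
    intro m x; funext i; simp [embQ]

lemma mem_closure_iff_finsetSum (W : Finset (Fin n → ℤ)) (x : Fin n → ℤ) :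
    x ∈ AddSubmonoid.closure (W : Set (Fin n → ℤ)) ↔
      ∃ a : (Fin n → ℤ) → ℕ, x = ∑ w ∈ W, a w • w := by
  classical
  constructor
  · intro hx
    induction hx using AddSubmonoid.closure_induction with
    | mem w hw => exact ⟨fun v => if v = w then 1 else 0, by
        rw [Finset.sum_eq_single w]
        · simp
        · intro v hv hne; simp [hne]
        · intro h; exact absurd hw h⟩
    | zero => exact ⟨0, by simp⟩
    | add x y _ _ hx hy =>
        obtain ⟨a, ha⟩ := hx
        obtain ⟨b, hb⟩ := hy
        exact ⟨a + b, by simp [ha, hb, add_smul, Finset.sum_add_distrib]⟩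
  · rintro ⟨a, rfl⟩
    refine AddSubmonoid.sum_mem _ fun w hw => ?_
    have hwmem : w ∈ AddSubmonoid.closure (W : Set (Fin n → ℤ)) :=
      AddSubmonoid.subset_closure (by exact_mod_cast hw)
    exact AddSubmonoid.nsmul_mem _ hwmem (a w)

end ASTVaux

namespace ASTVaux

variable {n : ℕ}

lemma exists_nsmul_mem_zspan (s : Set (Fin n → ℚ)) (v : Fin n → ℚ)
    (hv : v ∈ Submodule.span ℚ s) :
    ∃ m : ℕ, 0 < m ∧ (m : ℤ) • v ∈ Submodule.span ℤ s := by
  induction hv using Submodule.span_induction with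
  | mem x hx => exact ⟨1, one_pos, by simpa using Submodule.subset_span hx⟩
  | zero => exact ⟨1, one_pos, by simp⟩
  | add x y _ _ hx hy =>
      obtain ⟨m1, hm1, h1⟩ := hx
      obtain ⟨m2, hm2, h2⟩ := hy
      refine ⟨m1 * m2, Nat.mul_pos hm1 hm2, ?_⟩
      have : ((m1 * m2 : ℕ) : ℤ) • (x + y)
          = (m2 : ℤ) • ((m1 : ℤ) • x) + (m1 : ℤ) • ((m2 : ℤ) • y) := by
        rw [smul_add, smul_smul, smul_smul]
        push_cast
        ring_nf
      rw [this]
      exact Submodule.add_mem _ (Submodule.smul_mem _ _ h1) (Submodule.smul_mem _ _ h2)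
  | smul q x _ hx =>
      obtain ⟨m, hm, h⟩ := hx
      refine ⟨m * q.den, Nat.mul_pos hm q.den_pos, ?_⟩
      have hden : (q.den : ℚ) * q = (q.num : ℚ) := by
        have h0 : (q.den : ℚ) ≠ 0 := by
          exact_mod_cast q.den_pos.ne'
        have h1 := Rat.num_div_den q
        rw [div_eq_iff h0] at h1
        rw [mul_comm]
        exact h1.symm
      have key : ((m * q.den : ℕ) : ℤ) • (q • x) = q.num • ((m : ℤ) • x) := by
        rw [← Int.cast_smul_eq_zsmul ℚ, ← Int.cast_smul_eq_zsmul ℚ ((m:ℤ)) x,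
          ← Int.cast_smul_eq_zsmul ℚ q.num, smul_smul, smul_smul]
        congr 1
        push_cast
        rw [mul_assoc, hden]
        ring
      rw [key]
      exact Submodule.smul_mem _ _ h

end ASTVaux

namespace ASTVaux

variable {n : ℕ}

lemma indep_case (W : Finset (Fin n → ℤ))
    (hind : LinearIndependent ℚ (fun w : ↥W => embQ (w : Fin n → ℤ))) :
    ∃ N : ℕ, 0 < N ∧ ∀ (χ : Fin n → ℤ) (c : (Fin n → ℤ) → ℚ),
      (∀ w ∈ W, 0 ≤ c w) → embQ χ = ∑ w ∈ W, c w • embQ w →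
      N • χ ∈ AddSubmonoid.closure (W : Set (Fin n → ℤ)) := by
  classical
  set V := Fin n → ℚ
  set S : Set V := embQ '' (W : Set (Fin n → ℤ)) with hS
  set Z : Submodule ℤ V := Submodule.span ℤ S with hZ
  set Qs : Submodule ℚ V := Submodule.span ℚ S with hQs
  set G₀ : Submodule ℤ (Fin n → ℤ) :=
    Submodule.comap (embL (n := n)) (Qs.restrictScalars ℤ) with hG₀
  obtain ⟨gs, hgs⟩ : G₀.FG := IsNoetherian.noetherian G₀
  have hmul : ∀ g ∈ gs, ∃ m : ℕ, 0 < m ∧ (m : ℤ) • embQ g ∈ Z := by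
    intro g hg
    have : g ∈ G₀ := hgs ▸ Submodule.subset_span hg
    exact exists_nsmul_mem_zspan S (embQ g) this
  choose! f hf1 hf2 using hmul
  set N : ℕ := ∏ g ∈ gs, f g with hN
  have hNpos : 0 < N := Finset.prod_pos fun g hg => hf1 g hg
  have hdvd : ∀ g ∈ gs, (N : ℤ) • embQ g ∈ Z := by
    intro g hg
    obtain ⟨t, ht⟩ : f g ∣ N := Finset.dvd_prod_of_mem f hg
    have : (N : ℤ) • embQ g = (t : ℤ) • ((f g : ℤ) • embQ g) := by
      rw [smul_smul]; norm_cast; rw [ht, mul_comm]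
    rw [this]
    exact Submodule.smul_mem _ _ (hf2 g hg)
  have hall : ∀ x ∈ G₀, (N : ℤ) • embQ x ∈ Z := by
    intro x hx
    rw [← hgs] at hx
    induction hx using Submodule.span_induction with
    | mem g hg => exact hdvd g hg
    | zero => simp [embQ_zero]
    | add x y _ _ hx hy =>
        rw [show embQ (x + y) = embQ x + embQ y from embQ_add x y, smul_add]
        exact Submodule.add_mem _ hx hy
    | smul z x _ hx =>
        have : embQ (z • x) = z • embQ x := embL.map_smul z x
        rw [this, smul_comm]
        exact Submodule.smul_mem _ _ hx
  refine ⟨N, hNpos, ?_⟩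
  intro χ c hc0 hrep
  have hχG : χ ∈ G₀ := by
    simp only [hG₀, Submodule.mem_comap, Submodule.restrictScalars_mem]
    have : (embL (n := n)) χ = ∑ w ∈ W, c w • embQ w := hrep
    rw [this]
    refine Submodule.sum_mem _ fun w hw => Submodule.smul_mem _ _ ?_
    exact Submodule.subset_span ⟨w, by exact_mod_cast hw, rfl⟩
  have hZmem : (N : ℤ) • embQ χ ∈ Z := hall χ hχG
  -- obtain integer coefficients
  have hSfin : S = ↑(W.image embQ) := by
    rw [Finset.coe_image]
  rw [hZ, hSfin] at hZmem
  rw [Submodule.mem_span_finset] at hZmem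
  obtain ⟨zf, _, hzf⟩ := hZmem
  have hreindex : ∑ v ∈ W.image embQ, zf v • v = ∑ w ∈ W, zf (embQ w) • embQ w := by
    rw [Finset.sum_image]
    intro x _ y _ h
    exact embQ_injective h
  rw [hreindex] at hzf
  set zc : (Fin n → ℤ) → ℤ := fun w => zf (embQ w) with hzc
  -- uniqueness of coefficients
  have huniq : ∀ w ∈ W, ((N : ℚ)) * c w = ((zc w : ℚ)) := by
    have hsum0 : ∑ w ∈ W, (((N : ℚ)) * c w - ((zc w : ℚ))) • embQ w = 0 := by
      have e1 : ∑ w ∈ W, ((N : ℚ) * c w) • embQ w = (N : ℤ) • embQ χ := by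
        rw [← Int.cast_smul_eq_zsmul ℚ, hrep, Finset.smul_sum]
        refine Finset.sum_congr rfl fun w hw => ?_
        rw [smul_smul]
        norm_cast
      have e2 : ∑ w ∈ W, ((zc w : ℚ)) • embQ w = (N : ℤ) • embQ χ := by
        rw [← hzf]
        refine Finset.sum_congr rfl fun w hw => ?_
        rw [Int.cast_smul_eq_zsmul]
      simp only [sub_smul]
      rw [Finset.sum_sub_distrib, e1, e2, sub_self]
    intro w hw
    have hattach : ∑ i : ↥W, (((N : ℚ)) * c i - ((zc i : ℚ))) • embQ (i : Fin n → ℤ) = 0 := by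
      rw [← hsum0]
      exact Finset.sum_coe_sort W (fun w => (((N : ℚ)) * c w - ((zc w : ℚ))) • embQ w)
    have := linearIndependent_iff'.mp hind Finset.univ
      (fun i => ((N : ℚ)) * c i - ((zc i : ℚ))) (by simpa using hattach) ⟨w, hw⟩
      (Finset.mem_univ _)
    have h0 : ((N : ℚ)) * c w - ((zc w : ℚ)) = 0 := this
    linarith
  -- conclude
  rw [mem_closure_iff_finsetSum]
  refine ⟨fun w => (zc w).toNat, ?_⟩
  apply embQ_injective
  rw [show embQ (∑ w ∈ W, (zc w).toNat • w) = ∑ w ∈ W, ((zc w).toNat : ℚ) • embQ w by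
    rw [show embQ (∑ w ∈ W, (zc w).toNat • w) = embL (∑ w ∈ W, (zc w).toNat • w) from rfl,
      map_sum]
    refine Finset.sum_congr rfl fun w hw => ?_
    rw [show ((zc w).toNat • w : Fin n → ℤ) = ((zc w).toNat : ℤ) • w by rw [natCast_zsmul], embL.map_smul]
    rw [← Int.cast_smul_eq_zsmul ℚ]
    norm_cast]
  have hQsmul : embQ (N • χ) = (N : ℚ) • embQ χ := embQ_nsmul N χ
  rw [hQsmul, hrep, Finset.smul_sum]
  refine Finset.sum_congr rfl fun w hw => ?_
  rw [smul_smul, huniq w hw]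
  have htn : ((zc w).toNat : ℚ) = ((zc w : ℚ)) := by
    have h0 : (0:ℚ) ≤ (zc w : ℚ) := by
      rw [← huniq w hw]
      have := hc0 w hw
      positivity
    have h1 : (0:ℤ) ≤ zc w := by exact_mod_cast h0
    exact_mod_cast congrArg (Int.cast : ℤ → ℚ) (Int.toNat_of_nonneg h1)
  rw [htn]

end ASTVaux

namespace ASTVaux

variable {n : ℕ}

lemma core (W : Finset (Fin n → ℤ)) :
    ∃ N : ℕ, 0 < N ∧ ∀ (χ : Fin n → ℤ) (c : (Fin n → ℤ) → ℚ),
      (∀ w ∈ W, 0 ≤ c w) → embQ χ = ∑ w ∈ W, c w • embQ w →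
      N • χ ∈ AddSubmonoid.closure (W : Set (Fin n → ℤ)) := by
  classical
  induction W using Finset.strongInduction with
  | _ W ih =>
    by_cases hind : LinearIndependent ℚ (fun w : ↥W => embQ (w : Fin n → ℤ))
    · exact indep_case W hind
    · have hsub : ∀ w : ↥W, ∃ N : ℕ, 0 < N ∧ ∀ (χ : Fin n → ℤ) (c : (Fin n → ℤ) → ℚ),
          (∀ v ∈ W.erase ↑w, 0 ≤ c v) → embQ χ = ∑ v ∈ W.erase ↑w, c v • embQ v →
          N • χ ∈ AddSubmonoid.closure ((W.erase ↑w : Finset (Fin n → ℤ)) : Set (Fin n → ℤ)) :=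
        fun w => ih (W.erase ↑w) (Finset.erase_ssubset w.2)
      choose NE hNEpos hNEprop using hsub
      refine ⟨∏ w ∈ W.attach, NE w, Finset.prod_pos fun w _ => hNEpos w, ?_⟩
      intro χ c hc0 hrep
      -- extract a dependence with a positive coefficient
      obtain ⟨g, hgsum, i₀, hi₀⟩ :
          ∃ g : ↥W → ℚ, ∑ i : ↥W, g i • embQ (i : Fin n → ℤ) = 0 ∧ ∃ i, 0 < g i := by
        obtain ⟨g, hgsum, j, hj⟩ := Fintype.not_linearIndependent_iff.mp hind
        rcases lt_or_gt_of_ne hj with h | h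
        · refine ⟨-g, ?_, j, by simpa using h⟩
          rw [← neg_eq_zero, ← Finset.sum_neg_distrib] at *
          · simpa [neg_smul] using congrArg Neg.neg hgsum
        · exact ⟨g, hgsum, j, h⟩
      set Wp : Finset ↥W := Finset.univ.filter (fun i => 0 < g i) with hWp
      have hWpne : Wp.Nonempty := ⟨i₀, by simp [hWp, hi₀]⟩
      obtain ⟨istar, histar, hmin⟩ :=
        Finset.exists_min_image Wp (fun i => c ↑i / g i) hWpne
      have hgstar : 0 < g istar := by
        simpa [hWp] using histar
      set t : ℚ := c ↑istar / g istar with ht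
      have ht0 : 0 ≤ t := div_nonneg (hc0 _ istar.2) hgstar.le
      set c' : (Fin n → ℤ) → ℚ := fun w => if hw : w ∈ W then c w - t * g ⟨w, hw⟩ else 0
        with hc'
      have hc'0 : ∀ w ∈ W, 0 ≤ c' w := by
        intro w hw
        simp only [hc', dif_pos hw]
        rcases le_or_gt (g ⟨w, hw⟩) 0 with h | h
        · have : t * g ⟨w, hw⟩ ≤ 0 := mul_nonpos_of_nonneg_of_nonpos ht0 h
          have := hc0 w hw
          linarith
        · have hmem : (⟨w, hw⟩ : ↥W) ∈ Wp := by simp [hWp, h]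
          have hmin' := hmin _ hmem
          have h2 : t * g ⟨w, hw⟩ ≤ c w := by
            calc t * g ⟨w, hw⟩ ≤ (c w / g ⟨w, hw⟩) * g ⟨w, hw⟩ :=
                  mul_le_mul_of_nonneg_right hmin' h.le
              _ = c w := by field_simp
          linarith
      have hc'star : c' ↑istar = 0 := by
        simp only [hc', dif_pos istar.2]
        rw [ht]
        have : (⟨↑istar, istar.2⟩ : ↥W) = istar := Subtype.ext rfl
        rw [this]
        field_simp
        simp
      have hrep' : embQ χ = ∑ v ∈ W.erase ↑istar, c' v • embQ v := by
        have hsumW : ∑ v ∈ W, c' v • embQ v = embQ χ := by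
          rw [← Finset.sum_attach W (fun v => c' v • embQ v)]
          have : ∀ x : ↥W, c' ↑x = c ↑x - t * g x := by
            intro x
            simp only [hc', dif_pos x.2]
          calc ∑ x ∈ W.attach, c' ↑x • embQ ↑x
              = ∑ x ∈ W.attach, (c ↑x • embQ ↑x - t • (g x • embQ ↑x)) := by
                refine Finset.sum_congr rfl fun x _ => ?_
                rw [this x, sub_smul, smul_smul]
            _ = ∑ x ∈ W.attach, c ↑x • embQ ↑x - t • ∑ x ∈ W.attach, g x • embQ ↑x := by
                rw [Finset.sum_sub_distrib, Finset.smul_sum]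
            _ = embQ χ := by
                have hz : ∑ x ∈ W.attach, g x • embQ (↑x : Fin n → ℤ) = 0 := by
                  rw [← Finset.univ_eq_attach]
                  exact hgsum
                rw [hz, Finset.sum_attach W (fun v => c v • embQ v), ← hrep]
                simp
        rw [← hsumW]
        rw [Finset.sum_erase]
        rw [hc'star, zero_smul]
      have hkey := hNEprop istar χ c' (fun v hv => hc'0 v (Finset.mem_of_mem_erase hv)) hrep'
      have hle : AddSubmonoid.closure ((W.erase ↑istar : Finset (Fin n → ℤ)) : Set (Fin n → ℤ))
          ≤ AddSubmonoid.closure (W : Set (Fin n → ℤ)) := by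
        apply AddSubmonoid.closure_mono
        exact_mod_cast Finset.erase_subset _ _
      have hmem' : NE istar • χ ∈ AddSubmonoid.closure (W : Set (Fin n → ℤ)) := hle hkey
      obtain ⟨u, hu⟩ : NE istar ∣ ∏ w ∈ W.attach, NE w :=
        Finset.dvd_prod_of_mem NE (Finset.mem_attach _ istar)
      rw [hu, mul_comm, mul_smul]
      exact AddSubmonoid.nsmul_mem _ hmem' u

end ASTVaux

namespace ASTVaux

variable {n : ℕ}

lemma satcore (W : Finset (Fin n → ℤ)) :
    ∃ N : ℕ, 0 < N ∧ ∀ χ : Fin n → ℤ,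
      (∃ m : ℕ, 0 < m ∧ m • χ ∈ AddSubmonoid.closure (W : Set (Fin n → ℤ))) →
      N • χ ∈ AddSubmonoid.closure (W : Set (Fin n → ℤ)) := by
  obtain ⟨N, hN, hprop⟩ := core W
  refine ⟨N, hN, ?_⟩
  rintro χ ⟨m, hm, hmem⟩
  obtain ⟨a, ha⟩ := (mem_closure_iff_finsetSum W _).mp hmem
  refine hprop χ (fun w => (a w : ℚ) / (m : ℚ)) (fun w _ => by positivity) ?_
  have h1 : embQ (m • χ) = ∑ w ∈ W, (a w : ℚ) • embQ w := by
    rw [ha]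
    rw [show embQ (∑ w ∈ W, a w • w) = embL (∑ w ∈ W, a w • w) from rfl, map_sum]
    refine Finset.sum_congr rfl fun w hw => ?_
    rw [show (a w • w : Fin n → ℤ) = ((a w : ℤ)) • w by simp, embL.map_smul,
      ← Int.cast_smul_eq_zsmul ℚ]
    norm_cast
  have h2 : embQ (m • χ) = (m : ℚ) • embQ χ := embQ_nsmul m χ
  have hm0 : (m : ℚ) ≠ 0 := by positivity
  calc embQ χ = ((m : ℚ))⁻¹ • ((m : ℚ) • embQ χ) := by
        rw [smul_smul, inv_mul_cancel₀ hm0, one_smul]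
    _ = ((m : ℚ))⁻¹ • ∑ w ∈ W, (a w : ℚ) • embQ w := by rw [← h2, h1]
    _ = ∑ w ∈ W, ((a w : ℚ) / (m : ℚ)) • embQ w := by
        rw [Finset.smul_sum]
        refine Finset.sum_congr rfl fun w hw => ?_
        rw [smul_smul]
        congr 1
        field_simp
end ASTVaux


section Graded
variable {k : Type} [Field k] {n : ℕ}
variable {A : Type} [CommRing A] [Algebra k A]
variable (𝒜 : (Fin n → ℤ) → Submodule k A) [GradedAlgebra 𝒜]
variable {B : Type} [CommRing B] [Algebra k B]
variable (ℬ : (Fin n → ℤ) → Submodule k B) [GradedAlgebra ℬ]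

namespace ASTVaux

lemma exists_homog_gens [DecidableEq A] (hfg : Algebra.FiniteType k A) :
    ∃ D : Finset ((Fin n → ℤ) × A), (∀ p ∈ D, p.2 ∈ 𝒜 p.1) ∧
      Algebra.adjoin k ((D.image Prod.snd : Finset A) : Set A) = ⊤ := by
  classical
  obtain ⟨t, ht⟩ := hfg.out
  refine ⟨t.biUnion (fun f => ((DirectSum.decompose 𝒜 f).support).image
      (fun d => (d, (DirectSum.decompose 𝒜 f d : A)))), ?_, ?_⟩
  · intro p hp
    simp only [Finset.mem_biUnion, Finset.mem_image] at hp
    obtain ⟨f, _, d, _, rfl⟩ := hp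
    exact SetLike.coe_mem _
  · rw [eq_top_iff, ← ht]
    apply Algebra.adjoin_le
    intro f hf
    rw [← DirectSum.sum_support_decompose 𝒜 f]
    refine Subalgebra.sum_mem _ fun d hd => ?_
    apply Algebra.subset_adjoin
    simp only [Finset.coe_image, Set.mem_image, Finset.mem_coe, Finset.mem_biUnion]
    refine ⟨(d, (DirectSum.decompose 𝒜 f d : A)), ⟨f, hf, ?_⟩, rfl⟩
    rw [Finset.mem_image]
    exact ⟨d, hd, rfl⟩

lemma proj_mul_homog (φ : A →ₐ[k] B)
    (hgr : ∀ (χ : Fin n → ℤ) (a : A), a ∈ 𝒜 χ → φ a ∈ ℬ χ)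
    (d e : Fin n → ℤ) (y : B) (hy : y ∈ ℬ e) (a : A) :
    GradedRing.proj ℬ d (φ a * y) = φ (GradedRing.proj 𝒜 (d - e) a) * y := by
  classical
  induction a using DirectSum.Decomposition.inductionOn 𝒜 with
  | zero => simp
  | @homogeneous i m =>
      have hm : (m : A) ∈ 𝒜 i := SetLike.coe_mem m
      have hmul : φ (m : A) * y ∈ ℬ (i + e) :=
        SetLike.mul_mem_graded (hgr i m hm) hy
      by_cases hid : i = d - e
      · subst hid
        rw [GradedRing.proj_apply, GradedRing.proj_apply]
        rw [DirectSum.decompose_of_mem_same 𝒜 hm]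
        rw [show (d - e) + e = d by abel] at hmul
        rw [DirectSum.decompose_of_mem_same ℬ hmul]
      · rw [GradedRing.proj_apply, GradedRing.proj_apply]
        rw [DirectSum.decompose_of_mem_ne 𝒜 hm hid]
        have hne : i + e ≠ d := fun h => hid (by rw [← h]; abel)
        rw [DirectSum.decompose_of_mem_ne ℬ hmul hne]
        simp
  | add x y' hx hy' =>
      rw [map_add, add_mul, map_add, hx, hy', map_add, map_add, add_mul]

end ASTVaux
end Graded

section Graded2
variable {k : Type} [Field k] {n : ℕ}
variable {A : Type} [CommRing A] [Algebra k A]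
variable (𝒜 : (Fin n → ℤ) → Submodule k A) [GradedAlgebra 𝒜]
variable {B : Type} [CommRing B] [Algebra k B]

namespace ASTVaux

lemma weight_forward [DecidableEq A] (φ : A →ₐ[k] B)
    (D : Finset ((Fin n → ℤ) × A)) (hD1 : ∀ p ∈ D, p.2 ∈ 𝒜 p.1)
    (hD2 : Algebra.adjoin k ((D.image Prod.snd : Finset A) : Set A) = ⊤)
    (P : Ideal B) (hP : P.IsPrime) (WP : Finset (Fin n → ℤ))
    (hWP : ∀ q ∈ D, φ q.2 ∉ P → q.1 ∈ WP)
    (d : Fin n → ℤ) (a : A) (ha : a ∈ 𝒜 d) (hφa : φ a ∉ P) :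
    d ∈ AddSubmonoid.closure (WP : Set (Fin n → ℤ)) := by
  classical
  set gens : Set A := ((D.image Prod.snd : Finset A) : Set A) with hgens
  have hclaim : ∀ v ∈ Submonoid.closure gens,
      ∃ d', v ∈ 𝒜 d' ∧ (φ v ∉ P → d' ∈ AddSubmonoid.closure (WP : Set (Fin n → ℤ))) := by
    intro v hv
    induction hv using Submonoid.closure_induction with
    | mem g hg =>
        obtain ⟨q, hq, rfl⟩ : ∃ q ∈ D, q.2 = g := by
          simpa [hgens, Finset.mem_image] using hg
        exact ⟨q.1, hD1 q hq,
          fun h => AddSubmonoid.subset_closure (by exact_mod_cast hWP q hq h)⟩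
    | one => exact ⟨0, SetLike.one_mem_graded _, fun _ => AddSubmonoid.zero_mem _⟩
    | mul v₁ v₂ _ _ h1 h2 =>
        obtain ⟨d₁, hm1, hp1⟩ := h1
        obtain ⟨d₂, hm2, hp2⟩ := h2
        refine ⟨d₁ + d₂, SetLike.mul_mem_graded hm1 hm2, fun h => ?_⟩
        have hv1 : φ v₁ ∉ P := fun hh => h (by rw [map_mul]; exact Ideal.mul_mem_right _ _ hh)
        have hv2 : φ v₂ ∉ P := fun hh => h (by rw [map_mul]; exact Ideal.mul_mem_left _ _ hh)
        exact AddSubmonoid.add_mem _ (hp1 hv1) (hp2 hv2)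
  have haspan : a ∈ Submodule.span k ((Submonoid.closure gens : Submonoid A) : Set A) := by
    have h1 : a ∈ Subalgebra.toSubmodule (Algebra.adjoin k gens) := by
      rw [hD2]
      trivial
    rwa [Algebra.adjoin_eq_span] at h1
  rw [Submodule.mem_span_set] at haspan
  obtain ⟨cf, hsupp, hsum⟩ := haspan
  -- project to degree d
  have hproj : a = ∑ v ∈ cf.support, cf v • (GradedRing.proj 𝒜 d v) := by
    have h0 : a = GradedRing.proj 𝒜 d a := by
      rw [GradedRing.proj_apply, DirectSum.decompose_of_mem_same 𝒜 ha]
    rw [h0]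
    nth_rewrite 1 [← hsum]
    rw [Finsupp.sum, map_sum]
    refine Finset.sum_congr rfl fun v hv => ?_
    rw [GradedRing.proj_apply, GradedRing.proj_apply, DirectSum.decompose_smul]
    rfl
  have hterm : ∃ v ∈ cf.support, φ (cf v • GradedRing.proj 𝒜 d v) ∉ P := by
    by_contra h
    push_neg at h
    apply hφa
    rw [hproj, map_sum]
    exact Ideal.sum_mem _ fun v hv => h v hv
  obtain ⟨v, hv, hvP⟩ := hterm
  have hφpv : φ (GradedRing.proj 𝒜 d v) ∉ P := by
    intro hh
    apply hvP
    rw [map_smul, Algebra.smul_def]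
    exact Ideal.mul_mem_left _ _ hh
  have hvcl : v ∈ Submonoid.closure gens := hsupp hv
  obtain ⟨d', hd'mem, hd'imp⟩ := hclaim v hvcl
  by_cases hdd : d' = d
  · subst hdd
    have : GradedRing.proj 𝒜 d' v = v := by
      rw [GradedRing.proj_apply, DirectSum.decompose_of_mem_same 𝒜 hd'mem]
    rw [this] at hφpv
    exact hd'imp hφpv
  · exfalso
    have : GradedRing.proj 𝒜 d v = 0 := by
      rw [GradedRing.proj_apply, DirectSum.decompose_of_mem_ne 𝒜 hd'mem hdd]
    rw [this, map_zero] at hφpv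
    exact hφpv (Ideal.zero_mem P)

lemma weight_backward (φ : A →ₐ[k] B)
    (D : Finset ((Fin n → ℤ) × A)) (hD1 : ∀ p ∈ D, p.2 ∈ 𝒜 p.1)
    (P : Ideal B) (hP : P.IsPrime) (WP : Finset (Fin n → ℤ))
    (hWP : ∀ dd ∈ WP, ∃ q ∈ D, φ q.2 ∉ P ∧ q.1 = dd) :
    ∀ d ∈ AddSubmonoid.closure (WP : Set (Fin n → ℤ)), ∃ a ∈ 𝒜 d, φ a ∉ P := by
  intro d hd
  induction hd using AddSubmonoid.closure_induction with
  | mem dd hdd =>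
      obtain ⟨q, hq, hph, rfl⟩ := hWP dd (by exact_mod_cast hdd)
      exact ⟨q.2, hD1 q hq, hph⟩
  | zero =>
      refine ⟨1, SetLike.one_mem_graded _, fun h => hP.ne_top ?_⟩
      rw [map_one] at h
      rwa [Ideal.eq_top_iff_one]
  | add d₁ d₂ _ _ h1 h2 =>
      obtain ⟨a₁, hm1, hp1⟩ := h1
      obtain ⟨a₂, hm2, hp2⟩ := h2
      refine ⟨a₁ * a₂, SetLike.mul_mem_graded hm1 hm2, fun h => ?_⟩
      rw [map_mul] at h
      rcases hP.mem_or_mem h with h' | h'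
      · exact hp1 h'
      · exact hp2 h'

end ASTVaux
end Graded2

section Graded3
variable {k : Type} [Field k] {n : ℕ}
variable {A : Type} [CommRing A] [Algebra k A]
variable (𝒜 : (Fin n → ℤ) → Submodule k A) [GradedAlgebra 𝒜]
variable {B : Type} [CommRing B] [Algebra k B]
variable (ℬ : (Fin n → ℤ) → Submodule k B) [GradedAlgebra ℬ]

namespace ASTVaux

lemma integral_step (φ : A →ₐ[k] B)
    (hgr : ∀ (χ : Fin n → ℤ) (a : A), a ∈ 𝒜 χ → φ a ∈ ℬ χ)
    (hmodfin : ∃ s : Finset B, ∀ b : B, ∃ c : B → A, b = ∑ x ∈ s, φ (c x) * x)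
    (P : Ideal B) (hP : P.IsPrime)
    (ψ : Fin n → ℤ) (b : B) (hb : b ∈ ℬ ψ) (hbP : b ∉ P) :
    ∃ m : ℕ, 0 < m ∧ ∃ a ∈ 𝒜 (m • ψ), φ a ∉ P := by
  letI : Algebra A B := φ.toRingHom.toAlgebra
  have halg : ∀ a : A, algebraMap A B a = φ a := fun a => rfl
  haveI : Module.Finite A B := by
    obtain ⟨s, hs⟩ := hmodfin
    refine ⟨?_⟩
    rw [Submodule.fg_def]
    refine ⟨s, s.finite_toSet, ?_⟩
    rw [eq_top_iff]
    intro x _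
    obtain ⟨c, hc⟩ := hs x
    rw [hc]
    refine Submodule.sum_mem _ fun y hy => ?_
    have hsm : φ (c y) * y = c y • y := by
      rw [Algebra.smul_def, halg]
    rw [hsm]
    exact Submodule.smul_mem _ _ (Submodule.subset_span hy)
  have h1P : (1 : B) ∉ P := fun h => hP.ne_top (Ideal.eq_top_iff_one _ |>.mpr h)
  have hint : IsIntegral A b := IsIntegral.of_finite A b
  obtain ⟨p, hpm, hpe⟩ := hint
  set r := p.natDegree with hr
  have heq : (0 : B) = ∑ i ∈ Finset.range (r + 1), φ (p.coeff i) * b ^ i := by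
    rw [← hpe, Polynomial.eval₂_eq_sum_range]
    rfl
  have hrpos : 0 < r := by
    rcases Nat.eq_zero_or_pos r with h0 | h
    · exfalso
      have hp1 : p = 1 := (hpm.natDegree_eq_zero).mp h0
      rw [h0] at heq
      simp [hp1] at heq
      exact h1P (heq ▸ P.zero_mem)
    · exact h
  by_contra hcon
  push_neg at hcon
  -- hcon : ∀ m, 0 < m → ∀ a ∈ 𝒜 (m • ψ), φ a ∈ P
  have hproj := congrArg (GradedRing.proj ℬ (r • ψ)) heq
  rw [map_zero, map_sum] at hproj
  have hterm : ∀ i, i < r →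
      GradedRing.proj ℬ (r • ψ) (φ (p.coeff i) * b ^ i) ∈ P := by
    intro i hi
    have hbi : b ^ i ∈ ℬ (i • ψ) := SetLike.pow_mem_graded i hb
    rw [proj_mul_homog 𝒜 ℬ φ hgr (r • ψ) (i • ψ) (b ^ i) hbi (p.coeff i)]
    have hsmeq : (r - i : ℕ) • ψ = r • ψ - i • ψ := by
      have h1 : ((r - i : ℕ)) • ψ + i • ψ = r • ψ := by
        rw [← add_nsmul, Nat.sub_add_cancel hi.le]
      have h2 : (r • ψ - i • ψ) + i • ψ = r • ψ := by abel
      exact add_right_cancel (h1.trans h2.symm)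
    have hmem : GradedRing.proj 𝒜 (r • ψ - i • ψ) (p.coeff i) ∈ 𝒜 ((r - i : ℕ) • ψ) := by
      rw [hsmeq]
      rw [GradedRing.proj_apply]
      exact SetLike.coe_mem _
    have hφ : φ (GradedRing.proj 𝒜 (r • ψ - i • ψ) (p.coeff i)) ∈ P :=
      hcon (r - i) (Nat.sub_pos_of_lt hi) _ hmem
    exact Ideal.mul_mem_right _ _ hφ
  have hlast : GradedRing.proj ℬ (r • ψ) (φ (p.coeff r) * b ^ r) = b ^ r := by
    have : p.coeff r = 1 := hpm.coeff_natDegree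
    rw [this, map_one, one_mul, GradedRing.proj_apply,
      DirectSum.decompose_of_mem_same ℬ (SetLike.pow_mem_graded r hb)]
  have hbrP : b ^ r ∈ P := by
    rw [Finset.sum_range_succ, hlast] at hproj
    have hsumP : ∑ i ∈ Finset.range r, GradedRing.proj ℬ (r • ψ) (φ (p.coeff i) * b ^ i) ∈ P :=
      Ideal.sum_mem _ fun i hi => hterm i (Finset.mem_range.mp hi)
    have : b ^ r = -∑ i ∈ Finset.range r, GradedRing.proj ℬ (r • ψ) (φ (p.coeff i) * b ^ i) := by
      linear_combination -hproj
    rw [this]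
    exact Submodule.neg_mem _ hsumP
  exact hbP (hP.mem_of_pow_mem r hbrP)

end ASTVaux
end Graded3

/-- there is a positive integer `N`, depending only on `(A, 𝒜)`, such that for
every affine stable toric variety `(B, φ)` over `A` and every `χ ∈ Σ̂_A` one has
`φ(A_{Nχ}) = B_{Nχ}`. -/
theorem uniform_surjectivity_on_multiples
    (k : Type) [Field k] [IsAlgClosed k] [CharZero k] {n : ℕ}
    (A : Type) [CommRing A] [IsDomain A] [Algebra k A]
    (𝒜 : (Fin n → ℤ) → Submodule k A) [GradedAlgebra 𝒜]
    (hfg : Algebra.FiniteType k A) :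
    ∃ N : ℕ, 0 < N ∧
      ∀ (B : Type) [CommRing B] [Algebra k B]
        (ℬ : (Fin n → ℤ) → Submodule k B) [GradedAlgebra ℬ] (φ : A →ₐ[k] B),
        IsASTV 𝒜 ℬ φ → ∀ χ ∈ satWeightSet 𝒜,
          Submodule.map φ.toLinearMap (𝒜 (N • χ)) = ℬ (N • χ) := by
  classical
  obtain ⟨D, hD1, hD2⟩ := ASTVaux.exists_homog_gens 𝒜 hfg
  choose NW hNW1 hNW2 using (fun W : Finset (Fin n → ℤ) => ASTVaux.satcore W)
  set W₀ : Finset (Fin n → ℤ) := D.image Prod.fst with hW₀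
  set N : ℕ := ∏ W ∈ W₀.powerset, NW W with hN
  have hNpos : 0 < N := Finset.prod_pos fun W _ => hNW1 W
  refine ⟨N, hNpos, ?_⟩
  intro B _ _ ℬ _ φ hASTV χ hχ
  obtain ⟨hred, hgr, hdim1, hvanish, hmodfin⟩ := hASTV
  haveI : IsReduced B := hred
  set ψ : Fin n → ℤ := N • χ with hψdef
  obtain ⟨m₀, hm₀, hA⟩ := hχ
  have hψsat : ψ ∈ satWeightSet 𝒜 := by
    obtain ⟨a₀, ha₀mem, ha₀ne⟩ := (Submodule.ne_bot_iff _).mp hA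
    refine ⟨m₀, hm₀, ?_⟩
    rw [Submodule.ne_bot_iff]
    refine ⟨a₀ ^ N, ?_, pow_ne_zero _ ha₀ne⟩
    have hpow := SetLike.pow_mem_graded N ha₀mem
    have heqs : N • (m₀ • χ) = m₀ • ψ := by
      rw [hψdef, smul_smul, smul_smul, Nat.mul_comm]
    rwa [heqs] at hpow
  have hdim := hdim1 ψ hψsat
  have hnebot : ℬ ψ ≠ ⊥ := by
    intro h
    rw [h] at hdim
    simp [finrank_bot] at hdim
  obtain ⟨b, hbmem, hbne⟩ := (Submodule.ne_bot_iff _).mp hnebot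
  obtain ⟨P, hPpr, hbP⟩ : ∃ P : Ideal B, P.IsPrime ∧ b ∉ P := by
    by_contra h
    push_neg at h
    have hnil : IsNilpotent b := nilpotent_iff_mem_prime.mpr fun J hJ => h J hJ
    exact hbne hnil.eq_zero
  obtain ⟨m, hmpos, a₁, ha₁mem, ha₁P⟩ :=
    ASTVaux.integral_step 𝒜 ℬ φ hgr hmodfin P hPpr ψ b hbmem hbP
  set WP : Finset (Fin n → ℤ) := (D.filter (fun q => φ q.2 ∉ P)).image Prod.fst with hWP
  have hWPsub : WP ⊆ W₀ := Finset.image_subset_image (Finset.filter_subset _ _)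
  have hfwd : (m • ψ) ∈ AddSubmonoid.closure (WP : Set (Fin n → ℤ)) :=
    ASTVaux.weight_forward 𝒜 φ D hD1 hD2 P hPpr WP
      (fun q hq hqP => Finset.mem_image_of_mem _ (Finset.mem_filter.mpr ⟨hq, hqP⟩))
      _ a₁ ha₁mem ha₁P
  have hsm : m • ψ = (m * N) • χ := by rw [hψdef, smul_smul]
  have hNmem : NW WP • χ ∈ AddSubmonoid.closure (WP : Set (Fin n → ℤ)) :=
    hNW2 WP χ ⟨m * N, Nat.mul_pos hmpos hNpos, by rw [← hsm]; exact hfwd⟩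
  have hNχ : ψ ∈ AddSubmonoid.closure (WP : Set (Fin n → ℤ)) := by
    obtain ⟨u, hu⟩ : NW WP ∣ N := Finset.dvd_prod_of_mem NW (Finset.mem_powerset.mpr hWPsub)
    rw [hψdef, hu, mul_comm, mul_smul]
    exact AddSubmonoid.nsmul_mem _ hNmem u
  obtain ⟨a, hamem, haP⟩ := ASTVaux.weight_backward 𝒜 φ D hD1 P hPpr WP
    (fun dd hdd => by
      rw [hWP, Finset.mem_image] at hdd
      obtain ⟨q, hq, rfl⟩ := hdd
      rw [Finset.mem_filter] at hq
      exact ⟨q, hq.1, hq.2, rfl⟩) ψ hNχ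
  have hane : φ a ≠ 0 := fun h => haP (h ▸ P.zero_mem)
  apply le_antisymm
  · rintro x ⟨y, hy, rfl⟩
    exact hgr _ y hy
  · intro z hz
    have hvne : (⟨φ a, hgr _ a hamem⟩ : ℬ ψ) ≠ 0 := by
      intro h
      exact hane (congrArg Subtype.val h)
    obtain ⟨cc, hcc⟩ :=
      (finrank_eq_one_iff_of_nonzero' (⟨φ a, hgr _ a hamem⟩ : ℬ ψ) hvne).mp hdim ⟨z, hz⟩
    refine ⟨cc • a, Submodule.smul_mem _ _ hamem, ?_⟩
    have hφs : φ (cc • a) = cc • φ a := map_smul φ cc a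
    have hval := congrArg Subtype.val hcc
    simpa [hφs] using hval
end

section
/- There exists a finite subset A' ⊆ Σ̂_A, depending only on A, such that for every affine stable toric variety (B, φ) over A, the k-algebra B is generated by the finitely many one-dimensional homogeneous components B_χ with χ ∈ A'. -/
/-! ### Auxiliary lemmas -/

lemma astv_mem_closure_finset {M : Type*} [AddCommMonoid M] (J : Finset M) (x : M) :
    x ∈ AddSubmonoid.closure (J : Set M) ↔ ∃ e : M → ℕ, x = ∑ v ∈ J, e v • v := by
  classical
  constructor
  · intro hx
    induction hx using AddSubmonoid.closure_induction with
    | mem v hv =>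
      refine ⟨fun w => if w = v then 1 else 0, ?_⟩
      have h1 : ∀ w ∈ J, (if w = v then 1 else 0 : ℕ) • w = if w = v then v else 0 := by
        intro w _; split <;> simp_all
      rw [Finset.sum_congr rfl h1, Finset.sum_ite_eq' J v (fun _ => v)]
      simp [Finset.mem_coe.mp hv]
    | zero => exact ⟨fun _ => 0, by simp⟩
    | add x y hx hy ihx ihy =>
      obtain ⟨ex, hex⟩ := ihx
      obtain ⟨ey, hey⟩ := ihy
      exact ⟨fun v => ex v + ey v, by simp [hex, hey, add_nsmul, Finset.sum_add_distrib]⟩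
  · rintro ⟨e, rfl⟩
    exact AddSubmonoid.sum_mem _ (fun v hv =>
      AddSubmonoid.nsmul_mem _ (AddSubmonoid.subset_closure hv) _)

/-- The saturation of the submonoid of `ℤⁿ` generated by a finite set `J`. -/
def astvSat {n : ℕ} (J : Finset (Fin n → ℤ)) : Set (Fin n → ℤ) :=
  {χ | ∃ m : ℕ, 0 < m ∧ m • χ ∈ AddSubmonoid.closure (J : Set (Fin n → ℤ))}

lemma astv_subset_sat {n : ℕ} (J : Finset (Fin n → ℤ)) : (J : Set (Fin n → ℤ)) ⊆ astvSat J :=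
  fun v hv => ⟨1, one_pos, by simpa using AddSubmonoid.subset_closure hv⟩

/-- Gordan's lemma: the saturation of a finitely generated submonoid of `ℤⁿ` is a finitely
generated monoid. -/
lemma astv_gordan {n : ℕ} (J : Finset (Fin n → ℤ)) :
    ∃ G : Finset (Fin n → ℤ), (G : Set (Fin n → ℤ)) ⊆ astvSat J ∧
      ∀ χ ∈ astvSat J, χ ∈ AddSubmonoid.closure (G : Set (Fin n → ℤ)) := by
  classical
  set C : Fin n → ℤ := fun l => ∑ v ∈ J, |v l| with hC
  set G0 : Finset (Fin n → ℤ) := Finset.Icc (-C) C with hG0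
  refine ⟨(G0.filter (· ∈ astvSat J)) ∪ J, ?_, ?_⟩
  · intro g hg
    rcases Finset.mem_union.mp (by exact_mod_cast hg) with h | h
    · exact (Finset.mem_filter.mp h).2
    · exact astv_subset_sat J h
  · intro χ hχ
    obtain ⟨m, hm, hmem⟩ := hχ
    obtain ⟨e, he⟩ := (astv_mem_closure_finset J _).mp hmem
    set q : (Fin n → ℤ) → ℕ := fun v => e v / m with hq
    set ρ : Fin n → ℤ := χ - ∑ v ∈ J, q v • v with hρ
    have hsum : m • χ = (m • ∑ v ∈ J, q v • v) + ∑ v ∈ J, (e v % m) • v := by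
      rw [he, Finset.smul_sum, ← Finset.sum_add_distrib]
      refine Finset.sum_congr rfl fun v _ => ?_
      rw [smul_smul, ← add_nsmul, hq, Nat.div_add_mod]
    have hrho : m • ρ = ∑ v ∈ J, (e v % m) • v := by
      rw [hρ, smul_sub, hsum, add_sub_cancel_left]
    have hρSat : ρ ∈ astvSat J :=
      ⟨m, hm, by
        rw [hrho]
        exact AddSubmonoid.sum_mem _ fun v hv =>
          AddSubmonoid.nsmul_mem _ (AddSubmonoid.subset_closure hv) _⟩
    have hbound : ∀ l, |ρ l| ≤ C l := by
      intro l
      have hm' : (0:ℤ) < (m:ℤ) := by exact_mod_cast hm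
      have h1 : |(m • ρ) l| = (m:ℤ) * |ρ l| := by
        rw [Pi.smul_apply, nsmul_eq_mul, abs_mul, abs_of_nonneg (by positivity : (0:ℤ) ≤ (m:ℤ))]
      have h2 : |(m • ρ) l| ≤ (m:ℤ) * C l := by
        rw [hrho]
        calc |(∑ v ∈ J, (e v % m) • v) l| = |∑ v ∈ J, ((e v % m : ℕ) : ℤ) * v l| := by
              simp [Finset.sum_apply, Pi.smul_apply, nsmul_eq_mul]
          _ ≤ ∑ v ∈ J, |((e v % m : ℕ) : ℤ) * v l| := Finset.abs_sum_le_sum_abs _ _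
          _ ≤ ∑ v ∈ J, (m:ℤ) * |v l| := by
              refine Finset.sum_le_sum fun v _ => ?_
              rw [abs_mul]
              have : |((e v % m : ℕ) : ℤ)| ≤ (m:ℤ) := by
                rw [abs_of_nonneg (by positivity)]
                exact_mod_cast (Nat.mod_lt _ hm).le
              exact mul_le_mul_of_nonneg_right this (abs_nonneg _) |>.trans
                (mul_le_mul_of_nonneg_left le_rfl (by positivity))
          _ = (m:ℤ) * C l := by rw [hC, Finset.mul_sum]
      have := h1 ▸ h2
      exact le_of_mul_le_mul_left this hm'
    have hρG0 : ρ ∈ G0 := by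
      rw [hG0, Finset.mem_Icc]
      constructor
      · intro l
        have := (abs_le.mp (hbound l)).1
        simpa using this
      · intro l
        exact (abs_le.mp (hbound l)).2
    have hχeq : χ = (∑ v ∈ J, q v • v) + ρ := by rw [hρ]; abel
    rw [hχeq]
    refine AddSubmonoid.add_mem _
      (AddSubmonoid.sum_mem _ fun v hv => AddSubmonoid.nsmul_mem _
        (AddSubmonoid.subset_closure (Finset.mem_coe.mpr (Finset.mem_union_right _ hv))) _)
      (AddSubmonoid.subset_closure (Finset.mem_coe.mpr
        (Finset.mem_union_left _ (Finset.mem_filter.mpr ⟨hρG0, hρSat⟩))))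

/-- One-dimensionality: any element of a finrank-one submodule is a scalar multiple of any
given nonzero element. -/
lemma astv_dim_one {k B : Type} [Field k] [AddCommGroup B] [Module k B]
    (V : Submodule k B) (h1 : Module.finrank k V = 1) {u v : B}
    (hu : u ∈ V) (hune : u ≠ 0) (hv : v ∈ V) : ∃ c : k, v = c • u := by
  have hne : (⟨u, hu⟩ : V) ≠ 0 := by simpa [Submodule.mk_eq_zero] using hune
  have hspan := (finrank_eq_one_iff_of_nonzero (⟨u, hu⟩ : V) hne).mp h1
  have hvmem : (⟨v, hv⟩ : V) ∈ Submodule.span k {(⟨u, hu⟩ : V)} := hspan ▸ Submodule.mem_top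
  obtain ⟨c, hc⟩ := Submodule.mem_span_singleton.mp hvmem
  refine ⟨c, ?_⟩
  have := congrArg (Subtype.val) hc
  simpa using this.symm

/-- The degree-`d` component of `φ a * y` for `y` homogeneous of degree `e`. -/
lemma astv_decompose_phi_mul {k : Type} [Field k] {n : ℕ}
    {A : Type} [CommRing A] [Algebra k A] (𝒜 : (Fin n → ℤ) → Submodule k A) [GradedAlgebra 𝒜]
    {B : Type} [CommRing B] [Algebra k B] (ℬ : (Fin n → ℤ) → Submodule k B) [GradedAlgebra ℬ]
    (φ : A →ₐ[k] B) (hφ : ∀ (χ : Fin n → ℤ) (a : A), a ∈ 𝒜 χ → φ a ∈ ℬ χ)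
    (a : A) {e : Fin n → ℤ} {y : B} (hy : y ∈ ℬ e) (d : Fin n → ℤ) :
    (DirectSum.decompose ℬ (φ a * y) d : B) = φ (DirectSum.decompose 𝒜 a (d - e) : A) * y := by
  induction a using DirectSum.Decomposition.inductionOn 𝒜 with
  | zero => simp
  | @homogeneous ψ m =>
    by_cases hψ : ψ = d - e
    · have hmem : (m : A) ∈ 𝒜 (d - e) := hψ ▸ m.2
      rw [DirectSum.decompose_of_mem_same 𝒜 hmem]
      have : φ (m : A) * y ∈ ℬ d := by
        have := SetLike.mul_mem_graded (hφ _ _ hmem) hy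
        rwa [sub_add_cancel] at this
      rw [DirectSum.decompose_of_mem_same ℬ this]
    · have h1 : φ (m : A) * y ∈ ℬ (ψ + e) := SetLike.mul_mem_graded (hφ _ _ m.2) hy
      have h2 : ψ + e ≠ d := fun h => hψ (by rw [← h]; abel)
      rw [DirectSum.decompose_of_mem_ne ℬ h1 h2,
        DirectSum.decompose_of_mem_ne 𝒜 m.2 hψ]
      simp
  | add x x' hx hx' =>
    rw [map_add, add_mul, DirectSum.decompose_add, DirectSum.add_apply]
    push_cast
    rw [hx, hx', DirectSum.decompose_add, DirectSum.add_apply]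
    push_cast
    rw [map_add, add_mul]

/-- A finitely generated graded algebra admits a finite family of nonzero homogeneous
generators. -/
lemma astv_homog_gens {k : Type} [Field k] {n : ℕ}
    {A : Type} [CommRing A] [Algebra k A] (𝒜 : (Fin n → ℤ) → Submodule k A) [GradedAlgebra 𝒜]
    (hfg : Algebra.FiniteType k A) :
    ∃ T : Finset ((Fin n → ℤ) × A), (∀ q ∈ T, q.2 ∈ 𝒜 q.1 ∧ q.2 ≠ 0) ∧
      Algebra.adjoin k (Prod.snd '' (T : Set ((Fin n → ℤ) × A))) = ⊤ := by
  classical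
  obtain ⟨s, hs⟩ := hfg
  refine ⟨s.biUnion (fun a => (DFinsupp.support (DirectSum.decompose 𝒜 a)).image
      (fun i => (i, (DirectSum.decompose 𝒜 a i : A)))), ?_, ?_⟩
  · rintro ⟨d, x⟩ hq
    simp only [Finset.mem_biUnion, Finset.mem_image] at hq
    obtain ⟨a, ha, i, hi, heq⟩ := hq
    cases heq
    refine ⟨SetLike.coe_mem _, ?_⟩
    simpa [ZeroMemClass.coe_eq_zero] using DFinsupp.mem_support_iff.mp hi
  · rw [eq_top_iff, ← hs]
    refine Algebra.adjoin_le ?_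
    intro a ha
    rw [← DirectSum.sum_support_decompose 𝒜 a]
    refine Subalgebra.sum_mem _ fun i hi => Algebra.subset_adjoin ?_
    refine ⟨(i, (DirectSum.decompose 𝒜 a i : A)), ?_, rfl⟩
    rw [Finset.mem_coe, Finset.mem_biUnion]
    exact ⟨a, ha, Finset.mem_image.mpr ⟨i, hi, rfl⟩⟩

/-- there is a finite subset `A' ⊆ Σ̂_A`, depending only on `(A, 𝒜)`, such that
for every affine stable toric variety `(B, φ)` over `A`, the `k`-algebra `B` is generated by
the homogeneous components `B_χ`, `χ ∈ A'`. -/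
theorem uniform_finite_generating_weights
    (k : Type) [Field k] [IsAlgClosed k] [CharZero k] {n : ℕ}
    (A : Type) [CommRing A] [IsDomain A] [Algebra k A]
    (𝒜 : (Fin n → ℤ) → Submodule k A) [GradedAlgebra 𝒜]
    (hfg : Algebra.FiniteType k A) :
    ∃ A' : Finset (Fin n → ℤ), (A' : Set (Fin n → ℤ)) ⊆ satWeightSet 𝒜 ∧
      ∀ (B : Type) [CommRing B] [Algebra k B]
        (ℬ : (Fin n → ℤ) → Submodule k B) [GradedAlgebra ℬ] (φ : A →ₐ[k] B),
        IsASTV 𝒜 ℬ φ →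
          Algebra.adjoin k (⋃ χ ∈ A', (ℬ χ : Set B)) = ⊤ := by
  classical
  obtain ⟨T, hThom, hTgen⟩ := astv_homog_gens 𝒜 hfg
  set W : Finset (Fin n → ℤ) := T.image Prod.fst with hW
  choose G hGsat hGgen using fun J : Finset (Fin n → ℤ) => astv_gordan J
  have hWnz : ∀ d ∈ AddSubmonoid.closure (W : Set (Fin n → ℤ)), ∃ x ∈ 𝒜 d, x ≠ 0 := by
    intro d hd
    induction hd using AddSubmonoid.closure_induction with
    | mem v hv =>
      obtain ⟨q, hqT, hq1⟩ := Finset.mem_image.mp (Finset.mem_coe.mp hv)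
      exact ⟨q.2, hq1 ▸ (hThom q hqT).1, (hThom q hqT).2⟩
    | zero => exact ⟨1, SetLike.one_mem_graded 𝒜, one_ne_zero⟩
    | add x y hx hy ihx ihy =>
      obtain ⟨u, hu, hune⟩ := ihx
      obtain ⟨v, hv, hvne⟩ := ihy
      exact ⟨u * v, SetLike.mul_mem_graded hu hv, mul_ne_zero hune hvne⟩
  refine ⟨W.powerset.biUnion G, ?_, ?_⟩
  · intro g hg
    obtain ⟨J, hJ, hgJ⟩ := Finset.mem_biUnion.mp (Finset.mem_coe.mp hg)
    obtain ⟨m, hm, hmem⟩ := hGsat J hgJ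
    have hmW : m • g ∈ AddSubmonoid.closure (W : Set (Fin n → ℤ)) :=
      AddSubmonoid.closure_mono (Finset.coe_subset.mpr (Finset.mem_powerset.mp hJ)) hmem
    obtain ⟨x, hx, hxne⟩ := hWnz _ hmW
    exact ⟨m, hm, fun hbot => hxne (by rw [hbot] at hx; simpa using hx)⟩
  · intro B _ _ ℬ _ φ hASTV
    obtain ⟨hred, hφ, hdim, hzero, s, hsgen⟩ := hASTV
    haveI := hred
    letI : Algebra A B := φ.toRingHom.toAlgebra
    haveI : Module.Finite A B := by
      refine ⟨⟨s, ?_⟩⟩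
      rw [eq_top_iff]
      intro b _
      obtain ⟨c, hc⟩ := hsgen b
      rw [hc]
      refine Submodule.sum_mem _ fun x hx => ?_
      have : φ (c x) * x = c x • x := by
        rw [Algebra.smul_def, RingHom.algebraMap_toAlgebra]; rfl
      rw [this]
      exact Submodule.smul_mem _ _ (Submodule.subset_span hx)
    haveI : Algebra.IsIntegral A B := Algebra.IsIntegral.of_finite A B
    rw [eq_top_iff]
    intro b _
    rw [← DirectSum.sum_support_decompose ℬ b]
    refine Subalgebra.sum_mem _ fun χ _ => ?_
    by_cases hχ : χ ∈ satWeightSet 𝒜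
    case neg =>
      have hbot : (DirectSum.decompose ℬ b χ : B) ∈ (⊥ : Submodule k B) :=
        (hzero χ hχ) ▸ SetLike.coe_mem _
      rw [Submodule.mem_bot] at hbot
      rw [hbot]
      exact zero_mem _
    case pos =>
    suffices hsuf : ∀ y ∈ ℬ χ, y ∈ Algebra.adjoin k (⋃ χ' ∈ W.powerset.biUnion G, (ℬ χ' : Set B)) by
      exact hsuf _ (SetLike.coe_mem _)
    have h1 : Module.finrank k (ℬ χ) = 1 := hdim χ hχ
    have hℬne : ℬ χ ≠ ⊥ := by
      intro h; rw [h] at h1; simp at h1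
    obtain ⟨b₀, hb₀, hb₀ne⟩ := (Submodule.ne_bot_iff _).mp hℬne
    have hnil : b₀ ∉ nilradical B := by
      rw [mem_nilradical]
      exact fun h => hb₀ne h.eq_zero
    rw [nilradical_eq_sInf, Submodule.mem_sInf] at hnil
    push_neg at hnil
    obtain ⟨p, hpP, hb₀p⟩ := hnil
    haveI hp : Ideal.IsPrime p := hpP
    set Jp : Finset (Fin n → ℤ) := (T.filter (fun q => φ q.2 ∉ p)).image Prod.fst with hJp
    have hJpW : Jp ⊆ W := Finset.image_subset_image (Finset.filter_subset _ _)
    have hclos : ∀ d ∈ AddSubmonoid.closure (Jp : Set (Fin n → ℤ)), ∃ x ∈ 𝒜 d, φ x ∉ p := by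
      intro d hd
      induction hd using AddSubmonoid.closure_induction with
      | mem v hv =>
        obtain ⟨q, hqT, hq1⟩ := Finset.mem_image.mp (Finset.mem_coe.mp hv)
        obtain ⟨hqT', hqp⟩ := Finset.mem_filter.mp hqT
        exact ⟨q.2, hq1 ▸ (hThom q hqT').1, hqp⟩
      | zero =>
        refine ⟨1, SetLike.one_mem_graded 𝒜, ?_⟩
        rw [map_one]
        exact (Ideal.ne_top_iff_one p).mp hp.ne_top
      | add x y hx hy ihx ihy =>
        obtain ⟨u, hu, hup⟩ := ihx
        obtain ⟨v, hv, hvp⟩ := ihy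
        refine ⟨u * v, SetLike.mul_mem_graded hu hv, ?_⟩
        rw [map_mul]
        exact fun h => ((hp.mem_or_mem h).elim hup hvp)
    obtain ⟨P, hPmonic, hPeval⟩ := Algebra.IsIntegral.isIntegral (R := A) b₀
    have heval : (0:B) = ∑ i ∈ Finset.range (P.natDegree + 1), φ (P.coeff i) * b₀ ^ i := by
      have h2 : Polynomial.aeval b₀ P = 0 := by rw [Polynomial.aeval_def]; exact hPeval
      rw [Polynomial.aeval_eq_sum_range] at h2
      refine h2.symm.trans (Finset.sum_congr rfl fun i _ => ?_)
      rw [Algebra.smul_def, RingHom.algebraMap_toAlgebra]; rfl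
    let πB : B →+ B :=
      { toFun := fun zz => (DirectSum.decompose ℬ zz (P.natDegree • χ) : B)
        map_zero' := by simp
        map_add' := fun u v => by simp [DirectSum.decompose_add, DirectSum.add_apply] }
    have hproj : (0:B) = ∑ i ∈ Finset.range (P.natDegree + 1),
        φ ((DirectSum.decompose 𝒜 (P.coeff i) (P.natDegree • χ - i • χ) : A)) * b₀ ^ i := by
      have h0 := congrArg πB heval
      rw [map_zero, map_sum] at h0
      refine h0.trans (Finset.sum_congr rfl fun i _ => ?_)
      exact astv_decompose_phi_mul 𝒜 ℬ φ hφ (P.coeff i) (SetLike.pow_mem_graded i hb₀) _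
    rw [Finset.sum_range_succ] at hproj
    have htop : φ ((DirectSum.decompose 𝒜 (P.coeff P.natDegree)
        (P.natDegree • χ - P.natDegree • χ) : A)) * b₀ ^ P.natDegree = b₀ ^ P.natDegree := by
      rw [sub_self, hPmonic.coeff_natDegree,
        DirectSum.decompose_of_mem_same 𝒜 (SetLike.one_mem_graded 𝒜), map_one, one_mul]
    rw [htop] at hproj
    have hbN : b₀ ^ P.natDegree ∉ p := fun h => hb₀p (hp.mem_of_pow_mem _ h)
    have hSnp : ¬ (∑ i ∈ Finset.range P.natDegree,
        φ ((DirectSum.decompose 𝒜 (P.coeff i) (P.natDegree • χ - i • χ) : A)) * b₀ ^ i) ∈ p := by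
      intro h
      apply hbN
      have hb : b₀ ^ P.natDegree = -(∑ i ∈ Finset.range P.natDegree,
          φ ((DirectSum.decompose 𝒜 (P.coeff i) (P.natDegree • χ - i • χ) : A)) * b₀ ^ i) :=
        eq_neg_of_add_eq_zero_right hproj.symm
      rw [hb]
      exact Submodule.neg_mem _ h
    have hex : ∃ i ∈ Finset.range P.natDegree,
        φ ((DirectSum.decompose 𝒜 (P.coeff i) (P.natDegree • χ - i • χ) : A)) * b₀ ^ i ∉ p := by
      by_contra hall
      push_neg at hall
      exact hSnp (Ideal.sum_mem p hall)
    obtain ⟨i, hiN, hterm⟩ := hex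
    have hiN' : i < P.natDegree := Finset.mem_range.mp hiN
    have hdeg : P.natDegree • χ - i • χ = (P.natDegree - i) • χ := by
      rw [sub_nsmul χ hiN'.le, sub_eq_add_neg]
    rw [hdeg] at hterm
    have hφa : φ ((DirectSum.decompose 𝒜 (P.coeff i) ((P.natDegree - i) • χ) : A)) ∉ p :=
      fun h => hterm (Ideal.mul_mem_right _ _ h)
    set m : ℕ := P.natDegree - i with hmdef
    have hm : 0 < m := Nat.sub_pos_of_lt hiN'
    set a : A := (DirectSum.decompose 𝒜 (P.coeff i) (m • χ) : A) with hadef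
    have haA : a ∈ 𝒜 (m • χ) := SetLike.coe_mem _
    have hmono : ∀ μ ∈ Submonoid.closure (Prod.snd '' (T : Set ((Fin n → ℤ) × A))),
        ∃ d, μ ∈ 𝒜 d ∧ (φ μ ∉ p → d ∈ AddSubmonoid.closure (Jp : Set (Fin n → ℤ))) := by
      intro μ hμ
      induction hμ using Submonoid.closure_induction with
      | mem x hx =>
        obtain ⟨q, hqT, rfl⟩ := hx
        refine ⟨q.1, (hThom q hqT).1, fun hnp => AddSubmonoid.subset_closure ?_⟩
        rw [Finset.mem_coe, hJp, Finset.mem_image]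
        exact ⟨q, Finset.mem_filter.mpr ⟨hqT, hnp⟩, rfl⟩
      | one => exact ⟨0, SetLike.one_mem_graded 𝒜, fun _ => AddSubmonoid.zero_mem _⟩
      | mul x y hx hy ihx ihy =>
        obtain ⟨d1, hd1, hi1⟩ := ihx
        obtain ⟨d2, hd2, hi2⟩ := ihy
        refine ⟨d1 + d2, SetLike.mul_mem_graded hd1 hd2, fun hnp => ?_⟩
        rw [map_mul] at hnp
        exact AddSubmonoid.add_mem _ (hi1 fun h => hnp (Ideal.mul_mem_right _ _ h))
          (hi2 fun h => hnp (Ideal.mul_mem_left _ _ h))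
    have haspan : a ∈ Submodule.span k
        ((Submonoid.closure (Prod.snd '' (T : Set ((Fin n → ℤ) × A)))) : Set A) := by
      have hmem : a ∈ Subalgebra.toSubmodule
          (Algebra.adjoin k (Prod.snd '' (T : Set ((Fin n → ℤ) × A)))) := by
        rw [hTgen]; exact Submodule.mem_top
      rwa [Algebra.adjoin_eq_span] at hmem
    obtain ⟨c, hcsupp, hcsum⟩ := Submodule.mem_span_set.mp haspan
    rw [Finsupp.sum] at hcsum
    let πA : A →ₗ[k] A :=
      { toFun := fun zz => (DirectSum.decompose 𝒜 zz (m • χ) : A)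
        map_add' := fun u v => by simp [DirectSum.decompose_add, DirectSum.add_apply]
        map_smul' := fun r u => by simp [DirectSum.decompose_smul, DirectSum.smul_apply] }
    have haproj : a = ∑ μ ∈ c.support, c μ • (DirectSum.decompose 𝒜 μ (m • χ) : A) := by
      have h0 : πA a = a := DirectSum.decompose_of_mem_same 𝒜 haA
      calc a = πA a := h0.symm
        _ = πA (∑ μ ∈ c.support, c μ • μ) := by rw [hcsum]
        _ = ∑ μ ∈ c.support, c μ • πA μ := by
            rw [map_sum]
            exact Finset.sum_congr rfl fun μ _ => πA.map_smul _ _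
        _ = ∑ μ ∈ c.support, c μ • (DirectSum.decompose 𝒜 μ (m • χ) : A) := rfl
    have hφsum : φ a = ∑ μ ∈ c.support, φ (c μ • (DirectSum.decompose 𝒜 μ (m • χ) : A)) := by
      rw [haproj, map_sum]
    have hexμ : ∃ μ ∈ c.support, φ (c μ • (DirectSum.decompose 𝒜 μ (m • χ) : A)) ∉ p := by
      by_contra hall
      push_neg at hall
      exact hφa (hφsum ▸ Ideal.sum_mem p hall)
    obtain ⟨μ, hμs, hμnp⟩ := hexμ
    obtain ⟨d, hμd, himp⟩ := hmono μ (hcsupp hμs)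
    have hdm : d = m • χ := by
      by_contra hne
      rw [DirectSum.decompose_of_mem_ne 𝒜 hμd hne, smul_zero, map_zero] at hμnp
      exact hμnp (p.zero_mem)
    have hπμ : (DirectSum.decompose 𝒜 μ (m • χ) : A) = μ :=
      DirectSum.decompose_of_mem_same 𝒜 (hdm ▸ hμd)
    rw [hπμ] at hμnp
    have hφμ : φ μ ∉ p := by
      intro h
      apply hμnp
      rw [map_smul, Algebra.smul_def]
      exact Ideal.mul_mem_left _ _ h
    have hmχJp : m • χ ∈ AddSubmonoid.closure (Jp : Set (Fin n → ℤ)) := hdm ▸ himp hφμ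
    have hχSat : χ ∈ astvSat Jp := ⟨m, hm, hmχJp⟩
    obtain ⟨e, hχe⟩ := (astv_mem_closure_finset (G Jp) χ).mp (hGgen Jp χ hχSat)
    have hbgex : ∀ g : Fin n → ℤ, ∃ bg : B, g ∈ G Jp → bg ∈ ℬ g ∧ bg ∉ p := by
      intro g
      by_cases hg : g ∈ G Jp
      · obtain ⟨M, hM, hMg⟩ := hGsat Jp hg
        obtain ⟨xg, hxgA, hxgp⟩ := hclos _ hMg
        have hxgne : xg ≠ 0 := fun h => hxgp (by rw [h, map_zero]; exact p.zero_mem)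
        have hAne : 𝒜 (M • g) ≠ ⊥ := fun h => hxgne (by rw [h] at hxgA; simpa using hxgA)
        have hgsw : g ∈ satWeightSet 𝒜 := ⟨M, hM, hAne⟩
        have hMgsw : (M • g) ∈ satWeightSet 𝒜 := ⟨1, one_pos, by rwa [one_nsmul]⟩
        have hd1 : Module.finrank k (ℬ g) = 1 := hdim g hgsw
        have hdM : Module.finrank k (ℬ (M • g)) = 1 := hdim _ hMgsw
        have hgne : ℬ g ≠ ⊥ := by
          intro h; rw [h] at hd1; simp at hd1
        obtain ⟨bgv, hbgm, hbgne⟩ := (Submodule.ne_bot_iff _).mp hgne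
        have hbgM : bgv ^ M ∈ ℬ (M • g) := SetLike.pow_mem_graded M hbgm
        have hbgMne : bgv ^ M ≠ 0 := fun h => hbgne (IsNilpotent.eq_zero ⟨M, h⟩)
        have hφxB : φ xg ∈ ℬ (M • g) := hφ _ _ hxgA
        have hφxne : φ xg ≠ 0 := fun h => hxgp (h ▸ p.zero_mem)
        obtain ⟨cc, hcc⟩ := astv_dim_one (ℬ (M • g)) hdM hφxB hφxne hbgM
        have hccne : cc ≠ 0 := fun h => hbgMne (by rw [hcc, h, zero_smul])
        have hbgMp : bgv ^ M ∉ p := by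
          intro h
          apply hxgp
          have hxg : φ xg = cc⁻¹ • (bgv ^ M) := by
            rw [hcc, smul_smul, inv_mul_cancel₀ hccne, one_smul]
          rw [hxg, Algebra.smul_def]
          exact Ideal.mul_mem_left _ _ h
        exact ⟨bgv, fun _ => ⟨hbgm, fun h => hbgMp (Ideal.pow_mem_of_mem p h M hM)⟩⟩
      · exact ⟨0, fun h => absurd h hg⟩
    choose bg hbgspec using hbgex
    have hzmem : (∏ g ∈ G Jp, bg g ^ e g) ∈ ℬ χ := by
      have := SetLike.prod_mem_graded ℬ (fun g => e g • g) (fun g => bg g ^ e g)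
        (fun g hg => SetLike.pow_mem_graded _ ((hbgspec g hg).1))
      rwa [← hχe] at this
    have hznp : (∏ g ∈ G Jp, bg g ^ e g) ∉ p := by
      refine Finset.prod_induction _ (· ∉ p) (fun x y hx hy hxy => ?_)
        ((Ideal.ne_top_iff_one p).mp hp.ne_top) (fun g hg h => ?_)
      · exact (hp.mem_or_mem hxy).elim hx hy
      · exact (hbgspec g hg).2 (hp.mem_of_pow_mem _ h)
    have hzne : (∏ g ∈ G Jp, bg g ^ e g) ≠ 0 := fun h => hznp (h ▸ p.zero_mem)
    have hzadj : (∏ g ∈ G Jp, bg g ^ e g) ∈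
        Algebra.adjoin k (⋃ χ' ∈ W.powerset.biUnion G, (ℬ χ' : Set B)) := by
      refine Subalgebra.prod_mem _ fun g hg => pow_mem (Algebra.subset_adjoin ?_) _
      refine Set.mem_biUnion ?_ ((hbgspec g hg).1)
      exact Finset.mem_biUnion.mpr ⟨Jp, Finset.mem_powerset.mpr hJpW, hg⟩
    intro y hy
    obtain ⟨cy, hcy⟩ := astv_dim_one (ℬ χ) h1 hzmem hzne hy
    rw [hcy]
    exact Subalgebra.smul_mem _ hzadj _
end

section
/- Let (B, φ) be an affine stable toric variety over A, let ψ ∈ Σ̂_A, and let χ, χ' be lattice points of the GIT-cone σ_ψ (so χ, χ' ∈ σ_ψ ∩ ℤⁿ ⊆ Σ̂_A). Then the multiplication map B_χ ⊗_k B_{χ'} → B_{χ+χ'} is an isomorphism of one-dimensional k-vector spaces; equivalently, for any nonzero b ∈ B_χ and b' ∈ B_{χ'} the product b·b' is nonzero. -/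
lemma embQ_injective {n : ℕ} : Function.Injective (embQ (n := n)) := by
  intro a b h
  funext i
  have := congrFun h i
  simp only [embQ] at this
  exact_mod_cast this

lemma coneGen_lattice {n : ℕ} (G : Set (Fin n → ℤ)) (τ : Fin n → ℤ)
    (h : embQ τ ∈ coneGen (embQ '' G)) :
    ∃ (N : ℕ) (t : Finset (Fin n → ℚ)) (g : (Fin n → ℚ) → (Fin n → ℤ))
      (m : (Fin n → ℚ) → ℕ),
      0 < N ∧ (∀ v ∈ t, g v ∈ G) ∧ N • τ = ∑ v ∈ t, m v • g v := by
  classical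
  obtain ⟨t, c, hsub, hpos, heq⟩ := h
  have hpre : ∀ v : Fin n → ℚ, ∃ σ : Fin n → ℤ, v ∈ t → (σ ∈ G ∧ embQ σ = v) := by
    intro v
    by_cases hv : v ∈ t
    · obtain ⟨σ, hσ, h2⟩ := hsub hv
      exact ⟨σ, fun _ => ⟨hσ, h2⟩⟩
    · exact ⟨0, fun h => absurd h hv⟩
  choose g hg using hpre
  set N : ℕ := ∏ v ∈ t, (c v).den with hNdef
  have hN : 0 < N := Finset.prod_pos fun v _ => (c v).pos
  set m : (Fin n → ℚ) → ℕ := fun v => (N / (c v).den) * (c v).num.toNat with hmdef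
  have hm : ∀ v ∈ t, ((m v : ℚ)) = (N : ℚ) * c v := by
    intro v hv
    obtain ⟨e, he⟩ : (c v).den ∣ N := Finset.dvd_prod_of_mem _ hv
    have hdiv : N / (c v).den = e := by
      rw [he]; exact Nat.mul_div_cancel_left _ (c v).pos
    have hnum : ((c v).num.toNat : ℤ) = (c v).num :=
      Int.toNat_of_nonneg (Rat.num_nonneg.mpr (hpos v hv))
    have hden : ((c v).den : ℚ) * c v = (c v).num := Rat.den_mul_eq_num _
    have hnum' : (((c v).num.toNat : ℕ) : ℚ) = ((c v).num : ℚ) := by exact_mod_cast hnum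
    calc ((m v : ℕ) : ℚ) = (e : ℚ) * ((c v).num : ℚ) := by
          rw [hmdef]; push_cast [hdiv, hnum']; ring
      _ = (N : ℚ) * c v := by
          rw [he]; push_cast; rw [mul_comm ((c v).den : ℚ) (e:ℚ), mul_assoc, hden]
  clear hmdef hNdef
  clear_value N m
  refine ⟨N, t, g, m, hN, fun v hv => ((hg v) hv).1, ?_⟩
  apply embQ_injective
  funext i
  have hτi : (τ i : ℚ) = ∑ v ∈ t, c v * v i := by
    have := congrFun heq i
    simpa [embQ, Finset.sum_apply] using this
  show (((N • τ) i : ℤ) : ℚ) = (((∑ v ∈ t, m v • g v) i : ℤ) : ℚ)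
  calc (((N • τ) i : ℤ) : ℚ) = (N : ℚ) * (τ i : ℚ) := by
        simp only [Pi.smul_apply, nsmul_eq_mul]; push_cast; ring
    _ = ∑ v ∈ t, (N : ℚ) * c v * v i := by
        rw [hτi, Finset.mul_sum]; exact Finset.sum_congr rfl fun v _ => by ring
    _ = ∑ v ∈ t, ((m v : ℚ) * ((g v i : ℤ) : ℚ)) := by
        refine Finset.sum_congr rfl fun v hv => ?_
        have hvi : v i = ((g v i : ℤ) : ℚ) := by
          conv_lhs => rw [← ((hg v) hv).2]
          rfl
        rw [← hm v hv, hvi]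
    _ = (((∑ v ∈ t, m v • g v) i : ℤ) : ℚ) := by
        simp only [Finset.sum_apply, Pi.smul_apply, nsmul_eq_mul, Pi.mul_apply,
          Pi.natCast_apply]
        push_cast
        rfl

/-- for an affine stable toric variety `(B, φ)` over `A`, `ψ ∈ Σ̂_A`, and
lattice points `χ, χ'` of the GIT-cone `σ_ψ`, the multiplication map
`B_χ ⊗ B_{χ'} → B_{χ+χ'}` is an isomorphism of one-dimensional spaces; equivalently the
product of nonzero homogeneous elements of degrees `χ`, `χ'` is nonzero. -/
theorem mul_ne_zero_on_GIT_cone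
    (k : Type) [Field k] [IsAlgClosed k] [CharZero k] {n : ℕ}
    (A : Type) [CommRing A] [IsDomain A] [Algebra k A]
    (𝒜 : (Fin n → ℤ) → Submodule k A) [GradedAlgebra 𝒜]
    (hfg : Algebra.FiniteType k A)
    (B : Type) [CommRing B] [Algebra k B]
    (ℬ : (Fin n → ℤ) → Submodule k B) [GradedAlgebra ℬ]
    (φ : A →ₐ[k] B) (hastv : IsASTV 𝒜 ℬ φ)
    (ψ χ χ' : Fin n → ℤ) (hψ : ψ ∈ satWeightSet 𝒜)
    (hχ : embQ χ ∈ GITCone 𝒜 ψ) (hχ' : embQ χ' ∈ GITCone 𝒜 ψ)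
    (b b' : B) (hb : b ∈ ℬ χ) (hb0 : b ≠ 0) (hb' : b' ∈ ℬ χ') (hb'0 : b' ≠ 0) :
    b * b' ≠ 0 := by
  classical
  obtain ⟨hred, hgr, hdim, hbot, s, hs⟩ := hastv
  haveI := hred
  haveI : Nontrivial B := nontrivial_of_ne b 0 hb0
  -- basic facts
  have hSmem : ∀ (τ : Fin n → ℤ) (x : B), x ∈ ℬ τ → x ≠ 0 → τ ∈ satWeightSet 𝒜 := by
    intro τ x hx hx0
    by_contra h
    rw [hbot τ h] at hx
    exact hx0 hx
  have hvec : ∀ τ ∈ satWeightSet 𝒜, ∃ x : B, x ∈ ℬ τ ∧ x ≠ 0 := by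
    intro τ hτ
    have h1 := hdim τ hτ
    by_contra h
    push_neg at h
    have hB : ℬ τ = ⊥ := by
      rw [Submodule.eq_bot_iff]
      intro x hx
      by_contra hx0
      exact hx0 (h x hx)
    rw [hB] at h1
    simp at h1
  have hprop : ∀ τ ∈ satWeightSet 𝒜, ∀ x y : B, x ∈ ℬ τ → x ≠ 0 → y ∈ ℬ τ →
      ∃ c : k, c • x = y := by
    intro τ hτ x y hx hx0 hy
    have h1 := hdim τ hτ
    have hx0' : (⟨x, hx⟩ : ℬ τ) ≠ 0 := by
      simp only [ne_eq, Submodule.mk_eq_zero]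
      exact hx0
    obtain ⟨c, hc⟩ := (finrank_eq_one_iff_of_nonzero' (⟨x, hx⟩ : ℬ τ) hx0').mp h1 ⟨y, hy⟩
    refine ⟨c, ?_⟩
    have := congrArg (Subtype.val) hc
    simpa using this
  have hpow0 : ∀ (x : B), x ≠ 0 → ∀ m : ℕ, x ^ m ≠ 0 := by
    intro x hx m hxm
    exact hx (IsNilpotent.eq_zero ⟨m, hxm⟩)
  -- weights of b, b'
  have hχS : χ ∈ satWeightSet 𝒜 := hSmem χ b hb hb0
  have hχ'S : χ' ∈ satWeightSet 𝒜 := hSmem χ' b' hb' hb'0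
  -- a prime avoiding a nonzero element of ℬ ψ
  obtain ⟨xψ, hxψmem, hxψ0⟩ := hvec ψ hψ
  obtain ⟨p, hp_prime, hxψp⟩ : ∃ p : Ideal B, p.IsPrime ∧ xψ ∉ p := by
    by_contra h
    push_neg at h
    have : xψ ∈ nilradical B := by
      rw [nilradical_eq_sInf]
      exact Submodule.mem_sInf.mpr fun q hq => h q hq
    rw [nilradical_eq_zero] at this
    exact hxψ0 (by simpa using this)
  -- good weights
  set Good : Set (Fin n → ℤ) := {τ | ∃ x ∈ ℬ τ, x ∉ p} with hGoodDef
  have hGoodS : ∀ τ ∈ Good, τ ∈ satWeightSet 𝒜 := by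
    rintro τ ⟨x, hx, hxp⟩
    exact hSmem τ x hx (fun h0 => hxp (h0 ▸ p.zero_mem))
  have hGood_zero : (0 : Fin n → ℤ) ∈ Good :=
    ⟨1, SetLike.one_mem_graded ℬ, (Ideal.ne_top_iff_one p).mp hp_prime.ne_top⟩
  have hGood_add : ∀ τ σ : Fin n → ℤ, τ ∈ Good → σ ∈ Good → τ + σ ∈ Good := by
    rintro τ σ ⟨x, hx, hxp⟩ ⟨y, hy, hyp⟩
    exact ⟨x * y, SetLike.mul_mem_graded hx hy,
      fun h => ((hp_prime.mem_or_mem h).elim hxp hyp)⟩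
  have hGood_nsmul : ∀ (τ : Fin n → ℤ) (m : ℕ), τ ∈ Good → m • τ ∈ Good := by
    intro τ m hτ
    induction m with
    | zero => simpa using hGood_zero
    | succ m ih =>
      have := hGood_add (m • τ) τ ih hτ
      rwa [← succ_nsmul τ m] at this
  have hGood_sat : ∀ (τ : Fin n → ℤ) (m : ℕ), 0 < m → m • τ ∈ Good → τ ∈ Good := by
    rintro τ m hm ⟨y, hy, hyp⟩
    have hmτS : m • τ ∈ satWeightSet 𝒜 := hGoodS _ ⟨y, hy, hyp⟩
    have hτS : τ ∈ satWeightSet 𝒜 := by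
      obtain ⟨m', hm', hA⟩ := hmτS
      exact ⟨m' * m, Nat.mul_pos hm' hm, by rwa [mul_smul]⟩
    obtain ⟨x, hx, hx0⟩ := hvec τ hτS
    have hxm : x ^ m ∈ ℬ (m • τ) := SetLike.pow_mem_graded m hx
    obtain ⟨c, hc⟩ := hprop (m • τ) hmτS (x ^ m) y hxm (hpow0 x hx0 m) hy
    refine ⟨x, hx, fun hxp2 => hyp ?_⟩
    rw [← hc, Algebra.smul_def]
    exact Ideal.mul_mem_left _ _ (Ideal.pow_mem_of_mem p hxp2 m hm)
  have hcone_Good : ∀ τ : Fin n → ℤ, embQ τ ∈ coneGen (embQ '' Good) → τ ∈ Good := by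
    intro τ hτ
    obtain ⟨N, t, g, m, hN, hg, heq⟩ := coneGen_lattice Good τ hτ
    have hNτ : N • τ ∈ Good := by
      rw [heq]
      refine Finset.sum_induction _ (· ∈ Good) (fun a b ha hb => hGood_add a b ha hb)
        hGood_zero (fun v hv => hGood_nsmul (g v) (m v) (hg v hv))
    exact hGood_sat τ N hN hNτ
  -- B is a finite A-module, hence integral
  letI : Algebra A B := φ.toRingHom.toAlgebra
  haveI : IsScalarTower k A B := IsScalarTower.of_algebraMap_eq fun c => (φ.commutes c).symm
  haveI hBfin : Module.Finite A B := by
    rw [Module.finite_def]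
    refine ⟨s, ?_⟩
    rw [eq_top_iff]
    intro x _
    obtain ⟨c, hc⟩ := hs x
    rw [hc]
    refine Submodule.sum_mem _ fun y hy => ?_
    have : φ (c y) * y = c y • y := (Algebra.smul_def (c y) y).symm
    rw [this]
    exact Submodule.smul_mem _ _ (Submodule.subset_span hy)
  haveI : Algebra.IsIntegral A B := Algebra.IsIntegral.of_finite A B
  obtain ⟨P, hPm, hPe⟩ : IsIntegral A xψ := Algebra.IsIntegral.isIntegral xψ
  set N := P.natDegree with hNdef
  -- decompose commutes with finite sums, at a fixed degree
  have hπsum : ∀ {ι : Type} (t : Finset ι) (f : ι → B) (δ : Fin n → ℤ),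
      (DirectSum.decompose ℬ (∑ j ∈ t, f j) δ : B)
        = ∑ j ∈ t, (DirectSum.decompose ℬ (f j) δ : B) := by
    intro ι t f δ
    induction t using Finset.induction with
    | empty => simp
    | insert _ _ hnot ih =>
      rw [Finset.sum_insert hnot, DirectSum.decompose_add, DirectSum.add_apply,
        Submodule.coe_add, ih, Finset.sum_insert hnot]
  -- the graded component of a term
  have hterm : ∀ (j : ℕ) (a : A),
      (DirectSum.decompose ℬ (φ a * xψ ^ j) (N • ψ) : B)
        = φ ((DirectSum.decompose 𝒜 a ((N • ψ) - j • ψ) : A)) * xψ ^ j := by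
    intro j a
    have hxj : xψ ^ j ∈ ℬ (j • ψ) := SetLike.pow_mem_graded j hxψmem
    have expand : φ a * xψ ^ j
        = ∑ d ∈ (DirectSum.decompose 𝒜 a).support,
            φ ((DirectSum.decompose 𝒜 a d : A)) * xψ ^ j := by
      rw [← Finset.sum_mul, ← map_sum, DirectSum.sum_support_decompose]
    rw [expand, hπsum]
    rw [Finset.sum_eq_single ((N • ψ) - j • ψ)]
    · refine DirectSum.decompose_of_mem_same ℬ ?_
      have := SetLike.mul_mem_graded
        (hgr _ _ (SetLike.coe_mem (DirectSum.decompose 𝒜 a ((N • ψ) - j • ψ)))) hxj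
      rwa [sub_add_cancel] at this
    · intro d _ hdne
      refine DirectSum.decompose_of_mem_ne ℬ
        (SetLike.mul_mem_graded (hgr _ _ (SetLike.coe_mem (DirectSum.decompose 𝒜 a d))) hxj) ?_
      intro hcontra
      exact hdne (by rw [← hcontra]; abel)
    · intro hnot
      rw [DFinsupp.notMem_support_iff] at hnot
      rw [hnot]
      simp
  -- the graded piece of the integral equation
  set c : ℕ → A := fun j => (DirectSum.decompose 𝒜 (P.coeff j) ((N • ψ) - j • ψ) : A)
    with hcdef
  have heval : ∑ j ∈ Finset.range (N + 1), φ (P.coeff j) * xψ ^ j = 0 := by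
    have h2 := hPe
    rw [Polynomial.eval₂_eq_sum_range] at h2
    exact h2
  have hdec : ∑ j ∈ Finset.range (N + 1), φ (c j) * xψ ^ j = 0 := by
    calc ∑ j ∈ Finset.range (N + 1), φ (c j) * xψ ^ j
        = (DirectSum.decompose ℬ
            (∑ j ∈ Finset.range (N + 1), φ (P.coeff j) * xψ ^ j) (N • ψ) : B) := by
          rw [hπsum]
          exact (Finset.sum_congr rfl fun j _ => (hterm j _).symm)
      _ = 0 := by rw [heval]; simp
  have hcN : φ (c N) * xψ ^ N = xψ ^ N := by
    have hc1 : c N = 1 := by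
      show (DirectSum.decompose 𝒜 (P.coeff N) ((N • ψ) - N • ψ) : A) = 1
      rw [sub_self (N • ψ), hNdef, hPm.coeff_natDegree]
      exact DirectSum.decompose_of_mem_same 𝒜 (SetLike.one_mem_graded 𝒜)
    rw [hc1, map_one, one_mul]
  have hex : ∃ j, j < N ∧ φ (c j) ∉ p := by
    by_contra h
    push_neg at h
    have hpow : xψ ^ N ∈ p := by
      have hsplit := hdec
      rw [Finset.sum_range_succ, hcN] at hsplit
      have : xψ ^ N = -∑ j ∈ Finset.range N, φ (c j) * xψ ^ j :=
        eq_neg_of_add_eq_zero_right hsplit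
      rw [this]
      exact p.neg_mem (Ideal.sum_mem p fun j hj =>
        Ideal.mul_mem_right _ p (h j (Finset.mem_range.mp hj)))
    exact hxψp (hp_prime.mem_of_pow_mem N hpow)
  obtain ⟨j, hjN, hfp⟩ := hex
  set m0 := N - j with hm0def
  have hm0 : 0 < m0 := Nat.sub_pos_of_lt hjN
  have hfdeg : c j ∈ 𝒜 (m0 • ψ) := by
    have hidx : (N • ψ : Fin n → ℤ) - j • ψ = m0 • ψ := by
      funext i
      simp only [Pi.sub_apply, Pi.smul_apply, Pi.mul_apply, Pi.natCast_apply,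
        nsmul_eq_mul, hm0def]
      push_cast [Nat.cast_sub hjN.le]
      ring
    rw [← hidx]
    exact SetLike.coe_mem _
  -- Jacobson: find a maximal ideal of B above p avoiding φ (c j)
  haveI : Algebra.FiniteType k B := Algebra.FiniteType.trans hfg inferInstance
  haveI : IsJacobsonRing B := isJacobsonRing_of_finiteType (A := k)
  obtain ⟨M, hpM, hMmax, hfM⟩ :
      ∃ M : Ideal B, p ≤ M ∧ M.IsMaximal ∧ φ (c j) ∉ M := by
    by_contra h
    push_neg at h
    have : φ (c j) ∈ p.jacobson := by
      rw [Ideal.jacobson]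
      exact Submodule.mem_sInf.mpr fun J hJ => h J hJ.1 hJ.2
    rw [‹IsJacobsonRing B›.out hp_prime.isRadical] at this
    exact hfp this
  haveI := hMmax
  set 𝔪 : Ideal A := Ideal.comap (algebraMap A B) M with h𝔪def
  haveI h𝔪max : 𝔪.IsMaximal := Ideal.isMaximal_comap_of_isIntegral_of_isMaximal M
  have halg : ∀ a : A, algebraMap A B a = φ a := fun a => rfl
  -- ψ lies in the orbit cone of 𝔪
  have hψ𝔪 : embQ ψ ∈ orbitCone 𝒜 𝔪 := by
    refine ⟨{embQ (m0 • ψ)}, fun _ => (m0 : ℚ)⁻¹, ?_, ?_, ?_⟩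
    · intro v hv
      simp only [Finset.coe_singleton, Set.mem_singleton_iff] at hv
      subst hv
      refine ⟨m0 • ψ, ⟨c j, hfdeg, ?_⟩, rfl⟩
      intro hc𝔪
      rw [h𝔪def, Ideal.mem_comap, halg] at hc𝔪
      exact hfM hc𝔪
    · intro v _
      positivity
    · rw [Finset.sum_singleton]
      funext i
      simp only [embQ, Pi.smul_apply, nsmul_eq_mul, smul_eq_mul]
      have : (m0 : ℚ) ≠ 0 := by exact_mod_cast hm0.ne'
      push_cast
      field_simp
      simp only [Pi.mul_apply, Pi.natCast_apply]
      push_cast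
      ring
  -- the orbit cone of 𝔪 consists of good weights
  have hsub𝔪 : orbitCone 𝒜 𝔪 ⊆ coneGen (embQ '' Good) := by
    rintro x ⟨t, cc, hsub, hpos, heq⟩
    refine ⟨t, cc, ?_, hpos, heq⟩
    intro v hv
    obtain ⟨τ, ⟨f, hf𝒜, hf𝔪⟩, rfl⟩ := hsub hv
    refine ⟨τ, ⟨φ f, hgr τ f hf𝒜, fun hφp => ?_⟩, rfl⟩
    rw [h𝔪def, Ideal.mem_comap, halg] at hf𝔪
    exact hf𝔪 (hpM hφp)
  -- conclude : χ and χ' are good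
  have hχGood : χ ∈ Good :=
    hcone_Good χ (hsub𝔪 (Set.mem_iInter₂.mp hχ 𝔪 ⟨h𝔪max, hψ𝔪⟩))
  have hχ'Good : χ' ∈ Good :=
    hcone_Good χ' (hsub𝔪 (Set.mem_iInter₂.mp hχ' 𝔪 ⟨h𝔪max, hψ𝔪⟩))
  obtain ⟨x, hx, hxp⟩ := hχGood
  obtain ⟨x', hx', hx'p⟩ := hχ'Good
  have hx0 : x ≠ 0 := fun h0 => hxp (h0 ▸ p.zero_mem)
  have hx'0 : x' ≠ 0 := fun h0 => hx'p (h0 ▸ p.zero_mem)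
  obtain ⟨c1, hc1⟩ := hprop χ hχS x b hx hx0 hb
  obtain ⟨c2, hc2⟩ := hprop χ' hχ'S x' b' hx' hx'0 hb'
  have hc10 : c1 ≠ 0 := fun h0 => hb0 (by rw [← hc1, h0, zero_smul])
  have hc20 : c2 ≠ 0 := fun h0 => hb'0 (by rw [← hc2, h0, zero_smul])
  have hxx'p : x * x' ∉ p := fun h => ((hp_prime.mem_or_mem h).elim hxp hx'p)
  have hxx'0 : x * x' ≠ 0 := fun h0 => hxx'p (h0 ▸ p.zero_mem)
  have hbb' : b * b' = (c1 * c2) • (x * x') := by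
    rw [← hc1, ← hc2, smul_mul_smul_comm]
  rw [hbb']
  exact smul_ne_zero (mul_ne_zero hc10 hc20) hxx'0
end

section
/- Let (B, φ) and (B', φ') be affine stable toric varieties over A, and let α : B' → B be a graded k-algebra homomorphism satisfying α ∘ φ' = φ. Then α is an isomorphism. -/
lemma aux_pow_ne_zero {B : Type} [CommRing B] (hred : IsReduced B) {b : B} (hb : b ≠ 0)
    (m : ℕ) : b ^ m ≠ 0 := by
  intro h
  exact hb (hred.eq_zero b ⟨m, h⟩)

lemma aux_span {k V : Type} [Field k] [AddCommGroup V] [Module k V]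
    (h : Module.finrank k V = 1) {v : V} (hv : v ≠ 0) (w : V) : ∃ c : k, w = c • v := by
  have hsp := (finrank_eq_one_iff_of_nonzero v hv).mp h
  have hw : w ∈ Submodule.span k {v} := hsp ▸ Submodule.mem_top
  obtain ⟨c, hc⟩ := Submodule.mem_span_singleton.mp hw
  exact ⟨c, hc.symm⟩

lemma aux_span' {k M : Type} [Field k] [AddCommGroup M] [Module k M] {P : Submodule k M}
    (h : Module.finrank k P = 1) {u : M} (hu : u ∈ P) (hune : u ≠ 0)
    {w : M} (hw : w ∈ P) : ∃ c : k, w = c • u := by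
  obtain ⟨c, hc⟩ := aux_span h (v := (⟨u, hu⟩ : P))
    (fun h0 => hune (congrArg Subtype.val h0)) ⟨w, hw⟩
  exact ⟨c, by simpa using congrArg Subtype.val hc⟩

lemma aux_exists {k M : Type} [Field k] [AddCommGroup M] [Module k M] {P : Submodule k M}
    (h : Module.finrank k P = 1) : ∃ u ∈ P, u ≠ 0 := by
  refine (Submodule.ne_bot_iff P).mp ?_
  intro h0
  rw [h0, finrank_bot] at h
  exact one_ne_zero h.symm



/-- a graded `k`-algebra homomorphism `α : B' → B` between affine stable toric
varieties over `A` satisfying `α ∘ φ' = φ` is an isomorphism. -/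
theorem morphism_of_astv_is_isomorphism
    (k : Type) [Field k] [IsAlgClosed k] [CharZero k] {n : ℕ}
    (A : Type) [CommRing A] [IsDomain A] [Algebra k A]
    (𝒜 : (Fin n → ℤ) → Submodule k A) [GradedAlgebra 𝒜]
    (hfg : Algebra.FiniteType k A)
    (B : Type) [CommRing B] [Algebra k B]
    (ℬ : (Fin n → ℤ) → Submodule k B) [GradedAlgebra ℬ]
    (φ : A →ₐ[k] B) (hastv : IsASTV 𝒜 ℬ φ)
    (B' : Type) [CommRing B'] [Algebra k B']
    (ℬ' : (Fin n → ℤ) → Submodule k B') [GradedAlgebra ℬ']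
    (φ' : A →ₐ[k] B') (hastv' : IsASTV 𝒜 ℬ' φ')
    (α : B' →ₐ[k] B)
    (hgr : ∀ (χ : Fin n → ℤ) (b : B'), b ∈ ℬ' χ → α b ∈ ℬ χ)
    (hcomp : ∀ a : A, α (φ' a) = φ a) :
    Function.Bijective α := by
  classical
  obtain ⟨hredB, hφgr, hrk, hbot, s, hs⟩ := hastv
  obtain ⟨hredB', hφ'gr, hrk', hbot', s', hs'⟩ := hastv'
  -- elements of nonzero graded pieces witness saturation membership
  have hsatB : ∀ (χ : Fin n → ℤ) (u : B), u ∈ ℬ χ → u ≠ 0 → χ ∈ satWeightSet 𝒜 := by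
    intro χ u hm hne
    by_contra h
    rw [hbot χ h] at hm
    exact hne (Submodule.mem_bot k |>.mp hm)
  -- the finite set of weights of the module generators
  set T : Finset (Fin n → ℤ) :=
    s.biUnion (fun x => DFinsupp.support (DirectSum.decompose ℬ x)) with hT
  -- decomposition lemma from finite generation
  have DEC : ∀ ρ, ρ ∈ satWeightSet 𝒜 →
      ∃ ψ τ a u, ψ + τ = ρ ∧ τ ∈ T ∧ a ∈ 𝒜 ψ ∧ u ∈ ℬ τ ∧ φ a * u ≠ 0 := by
    intro ρ hρ
    have hbne : ℬ ρ ≠ ⊥ := by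
      intro h
      have h1 := hrk ρ hρ
      rw [h, finrank_bot] at h1
      exact one_ne_zero h1.symm
    obtain ⟨b, hbmem, hbne0⟩ := (Submodule.ne_bot_iff _).mp hbne
    obtain ⟨c, hc⟩ := hs b
    by_contra hcon
    push_neg at hcon
    apply hbne0
    have hproj : GradedRing.proj ℬ ρ b = b := by
      rw [GradedRing.proj_apply, DirectSum.decompose_of_mem_same ℬ hbmem]
    rw [← hproj, hc, map_sum]
    refine Finset.sum_eq_zero ?_
    intro x hx
    have hx2 : φ (c x) * x =
        ∑ ψ ∈ DFinsupp.support (DirectSum.decompose 𝒜 (c x)),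
          ∑ τ ∈ DFinsupp.support (DirectSum.decompose ℬ x),
            φ ((DirectSum.decompose 𝒜 (c x) ψ : A)) * ((DirectSum.decompose ℬ x τ : B)) := by
      have e : (∑ ψ ∈ DFinsupp.support (DirectSum.decompose 𝒜 (c x)),
            φ ((DirectSum.decompose 𝒜 (c x) ψ : A))) *
          (∑ τ ∈ DFinsupp.support (DirectSum.decompose ℬ x),
            ((DirectSum.decompose ℬ x τ : B))) = φ (c x) * x := by
        rw [← map_sum φ (fun ψ => ((DirectSum.decompose 𝒜 (c x) ψ : A)))
          (DFinsupp.support (DirectSum.decompose 𝒜 (c x))),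
          DirectSum.sum_support_decompose, DirectSum.sum_support_decompose]
      rw [← e, Finset.sum_mul_sum]
    rw [hx2, map_sum]
    refine Finset.sum_eq_zero ?_
    intro ψ hψ
    rw [map_sum]
    refine Finset.sum_eq_zero ?_
    intro τ hτ
    have hmem : φ ((DirectSum.decompose 𝒜 (c x) ψ : A)) * ((DirectSum.decompose ℬ x τ : B))
        ∈ ℬ (ψ + τ) :=
      SetLike.mul_mem_graded (hφgr ψ _ (SetLike.coe_mem _)) (SetLike.coe_mem _)
    by_cases h : ψ + τ = ρ
    · have h0 := hcon ψ τ ((DirectSum.decompose 𝒜 (c x) ψ : A))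
        ((DirectSum.decompose ℬ x τ : B)) h (Finset.mem_biUnion.mpr ⟨x, hx, hτ⟩)
        (SetLike.coe_mem _) (SetLike.coe_mem _)
      rw [h0, map_zero]
    · rw [GradedRing.proj_apply, DirectSum.decompose_of_mem_ne ℬ hmem h]
  -- chain data
  have chainProp : ∀ x, x ∈ satWeightSet 𝒜 →
      ∃ (r : ℕ) (ψ τ : Fin n → ℤ) (a : A) (u : B), 2 ≤ r ∧ r • x = ψ + τ ∧
        τ ∈ satWeightSet 𝒜 ∧ a ∈ 𝒜 ψ ∧ u ∈ ℬ τ ∧ φ a * u ≠ 0 ∧ τ ∈ T := by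
    intro x hx
    obtain ⟨m0, hm0, hA⟩ := hx
    obtain ⟨a0, ha0mem, ha0ne⟩ := (Submodule.ne_bot_iff _).mp hA
    have hρ : (2 * m0) • x ∈ satWeightSet 𝒜 := by
      refine ⟨1, one_pos, ?_⟩
      rw [one_smul]
      refine (Submodule.ne_bot_iff _).mpr ⟨a0 ^ 2, ?_, pow_ne_zero 2 ha0ne⟩
      have h2 := SetLike.pow_mem_graded 2 ha0mem
      rwa [← mul_smul] at h2
    obtain ⟨ψ, τ, a, u, hsum, hTm, ha, hu, hne⟩ := DEC _ hρ
    exact ⟨2 * m0, ψ, τ, a, u, by omega, hsum.symm,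
      hsatB τ u hu (right_ne_zero_of_mul hne), ha, hu, hne, hTm⟩
  choose rF ψF τF aF uF h2F hrelF hτsatF haF huF hprodF hTF using chainProp
  -- THE KEY LEMMA
  have key : ∀ χ ∈ satWeightSet 𝒜, ∃ m : ℕ, 0 < m ∧ ∃ a ∈ 𝒜 (m • χ), φ a ≠ 0 := by
    intro χ hχ
    set Good : (Fin n → ℤ) → Prop := fun x => ∃ m : ℕ, 0 < m ∧ ∃ a ∈ 𝒜 (m • x), φ a ≠ 0
      with hGood
    -- the chain sequence
    let seq : ℕ → {x : Fin n → ℤ // x ∈ satWeightSet 𝒜} := fun l =>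
      Nat.rec ⟨χ, hχ⟩ (fun _ p => ⟨τF p.1 p.2, hτsatF p.1 p.2⟩) l
    have hseq : ∀ l, (seq (l + 1)).1 = τF (seq l).1 (seq l).2 := fun l => rfl
    -- back propagation of Goodness
    have back : ∀ l, Good (seq (l + 1)).1 → Good (seq l).1 := by
      intro l hG
      obtain ⟨q', hq'pos, d, hd, hφd⟩ := hG
      rw [hseq l] at hd
      set x := (seq l).1
      set hx := (seq l).2
      have hune : uF x hx ≠ 0 := right_ne_zero_of_mul (hprodF x hx)
      have huq' : uF x hx ^ q' ∈ ℬ (q' • τF x hx) := SetLike.pow_mem_graded q' (huF x hx)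
      have huq'ne : uF x hx ^ q' ≠ 0 := aux_pow_ne_zero hredB hune q'
      have hφdmem : φ d ∈ ℬ (q' • τF x hx) := hφgr _ _ hd
      have hsatτ : q' • τF x hx ∈ satWeightSet 𝒜 := hsatB _ _ hφdmem hφd
      obtain ⟨c, hc⟩ := aux_span' (hrk _ hsatτ) huq' huq'ne hφdmem
      have hcne : c ≠ 0 := fun h => hφd (by rw [hc, h, zero_smul])
      refine ⟨q' * rF x hx, Nat.mul_pos hq'pos (by have := h2F x hx; omega),
        aF x hx ^ q' * d, ?_, ?_⟩
      · have hmem := SetLike.mul_mem_graded (SetLike.pow_mem_graded q' (haF x hx)) hd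
        rwa [← smul_add, ← hrelF x hx, ← mul_smul] at hmem
      · intro h0
        have hz : (φ (aF x hx) * uF x hx) ^ q' = 0 := by
          rw [map_mul, map_pow, hc, mul_smul_comm, ← mul_pow] at h0
          exact (smul_eq_zero.mp h0).resolve_left hcne
        exact aux_pow_ne_zero hredB (hprodF x hx) q' hz
    -- pigeonhole to find a cycle
    have hmaps : ∀ i : Fin (T.card + 1), (seq (i.1 + 1)).1 ∈ T := by
      intro i
      rw [hseq]
      exact hTF _ _
    obtain ⟨i, -, j, -, hij, heq⟩ :=
      Finset.exists_ne_map_eq_of_card_lt_of_maps_to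
        (s := (Finset.univ : Finset (Fin (T.card + 1)))) (t := T)
        (by simp) (fun i _ => hmaps i)
    -- wlog i < j
    obtain ⟨p, q, hpq, hp1, hcyc⟩ : ∃ p q : ℕ, p < q ∧ 1 ≤ p ∧ (seq p).1 = (seq q).1 := by
      rcases lt_or_gt_of_ne hij with h | h
      · exact ⟨i.1 + 1, j.1 + 1, by omega, by omega, heq⟩
      · exact ⟨j.1 + 1, i.1 + 1, by omega, by omega, heq.symm⟩
    -- fixed nonzero element of the top of the chain
    obtain ⟨uq, huqmem, huqne⟩ := aux_exists (hrk _ (seq q).2)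
    -- the descending chain of nonvanishing products
    set QQ : ℕ → Prop := fun l => ∃ (N : ℕ) (δ : Fin n → ℤ) (w : A),
      ((l = q ∧ N = 1) ∨ 2 ≤ N) ∧ δ + (seq q).1 = N • (seq l).1 ∧ w ∈ 𝒜 δ ∧
        φ w * uq ≠ 0 with hQQ
    have base : QQ q := by
      refine ⟨1, 0, 1, Or.inl ⟨rfl, rfl⟩, by rw [zero_add, one_smul],
        SetLike.one_mem_graded 𝒜, ?_⟩
      rw [map_one, one_mul]
      exact huqne
    have step : ∀ l, QQ (l + 1) → ∃ (N : ℕ) (δ : Fin n → ℤ) (w : A),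
        2 ≤ N ∧ δ + (seq q).1 = N • (seq l).1 ∧ w ∈ 𝒜 δ ∧ φ w * uq ≠ 0 := by
      intro l hQ
      obtain ⟨N, δ, w, hdisj, hδ, hw, hne⟩ := hQ
      have hN : 1 ≤ N := by rcases hdisj with ⟨-, h⟩ | h <;> omega
      set x := (seq l).1
      set hx := (seq l).2
      rw [hseq l] at hδ
      have huN : uF x hx ^ N ∈ ℬ (δ + (seq q).1) := by
        rw [hδ]
        exact SetLike.pow_mem_graded N (huF x hx)
      have hune : uF x hx ≠ 0 := right_ne_zero_of_mul (hprodF x hx)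
      have huNne : uF x hx ^ N ≠ 0 := aux_pow_ne_zero hredB hune N
      have hwq : φ w * uq ∈ ℬ (δ + (seq q).1) :=
        SetLike.mul_mem_graded (hφgr δ w hw) huqmem
      have hsatδ : δ + (seq q).1 ∈ satWeightSet 𝒜 := hsatB _ _ hwq hne
      obtain ⟨c, hc⟩ := aux_span' (hrk _ hsatδ) hwq hne huN
      refine ⟨N * rF x hx, N • ψF x hx + δ, aF x hx ^ N * w, ?_, ?_, ?_, ?_⟩
      · have h2r := h2F x hx
        have : rF x hx ≤ N * rF x hx := Nat.le_mul_of_pos_left _ (by omega)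
        omega
      · rw [add_assoc, hδ, ← smul_add, ← hrelF x hx, ← mul_smul]
      · exact SetLike.mul_mem_graded (SetLike.pow_mem_graded N (haF x hx)) hw
      · intro h0
        have hz : (φ (aF x hx) * uF x hx) ^ N = 0 := by
          calc (φ (aF x hx) * uF x hx) ^ N
              = φ (aF x hx) ^ N * uF x hx ^ N := mul_pow _ _ _
            _ = φ (aF x hx) ^ N * (c • (φ w * uq)) := by rw [hc]
            _ = c • (φ (aF x hx) ^ N * (φ w * uq)) := mul_smul_comm _ _ _
            _ = c • (φ (aF x hx ^ N * w) * uq) := by rw [map_mul, map_pow, mul_assoc]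
            _ = 0 := by rw [h0, smul_zero]
        exact aux_pow_ne_zero hredB (hprodF x hx) N hz
    -- descend from q to p
    have descQ : ∀ m, QQ (q - m) := by
      intro m
      induction m with
      | zero => simpa using base
      | succ m ih =>
        by_cases h : q - (m + 1) = q - m
        · rwa [h]
        · have hm : q - m = (q - (m + 1)) + 1 := by omega
          rw [hm] at ih
          obtain ⟨N, δ, w, h2, hδ, hw, hne⟩ := step (q - (m + 1)) ih
          exact ⟨N, δ, w, Or.inr h2, hδ, hw, hne⟩
    have hQp : QQ p := by
      have h := descQ (q - p)
      rwa [show q - (q - p) = p by omega] at h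
    obtain ⟨N, δ, w, hdisj, hδ, hw, hne⟩ := hQp
    have hN2 : 2 ≤ N := by
      rcases hdisj with ⟨h, -⟩ | h
      · omega
      · exact h
    -- conclude Good (seq p).1
    have hGp : Good (seq p).1 := by
      have hδq : δ + (seq q).1 = N • (seq q).1 := by
        have h' := hδ
        rw [hcyc] at h'
        exact h'
      have hrw : N • (seq q).1 = (N - 1) • (seq q).1 + (seq q).1 := by
        rw [← succ_nsmul, Nat.sub_add_cancel (by omega)]
      have hδ' : δ = (N - 1) • (seq q).1 := add_right_cancel (hδq.trans hrw)
      rw [hcyc]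
      refine ⟨N - 1, by omega, w, ?_, fun h => hne (by rw [h, zero_mul])⟩
      rwa [hδ'] at hw
    -- descend Goodness from p to 0
    have descG : ∀ m, Good (seq (p - m)).1 := by
      intro m
      induction m with
      | zero => simpa using hGp
      | succ m ih =>
        by_cases h : p - (m + 1) = p - m
        · rwa [h]
        · have hm : p - m = (p - (m + 1)) + 1 := by omega
          rw [hm] at ih
          exact back (p - (m + 1)) ih
    have h0 := descG p
    rwa [show p - p = 0 from by omega] at h0
  -- α does not vanish on nonzero homogeneous elements of saturated weight
  have comp : ∀ χ, χ ∈ satWeightSet 𝒜 → ∀ b' ∈ ℬ' χ, b' ≠ 0 → α b' ≠ 0 := by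
    intro χ hχ b' hb'mem hb'ne
    obtain ⟨m, hmpos, a, ha, hφa⟩ := key χ hχ
    have hφ'a : φ' a ∈ ℬ' (m • χ) := hφ'gr _ _ ha
    have hαφ' : α (φ' a) = φ a := hcomp a
    have hb'm : b' ^ m ∈ ℬ' (m • χ) := SetLike.pow_mem_graded m hb'mem
    have hb'mne : b' ^ m ≠ 0 := aux_pow_ne_zero hredB' hb'ne m
    have hane : a ≠ 0 := fun h => hφa (by rw [h, map_zero])
    have hsat : m • χ ∈ satWeightSet 𝒜 :=
      ⟨1, one_pos, by rw [one_smul]; exact (Submodule.ne_bot_iff _).mpr ⟨a, ha, hane⟩⟩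
    obtain ⟨c, hc⟩ := aux_span' (hrk' _ hsat) hb'm hb'mne hφ'a
    intro hα0
    apply hφa
    rw [← hαφ', hc, map_smul, map_pow, hα0, zero_pow (by omega), smul_zero]
  -- α commutes with the decompositions
  have αcomm : ∀ (b' : B') (χ : Fin n → ℤ),
      (DirectSum.decompose ℬ (α b') χ : B) = α (DirectSum.decompose ℬ' b' χ : B') := by
    intro b'
    induction b' using DirectSum.Decomposition.inductionOn ℬ' with
    | zero => intro χ; simp
    | @homogeneous i m =>
      intro χ
      rcases eq_or_ne i χ with h | h
      · subst h
        rw [DirectSum.decompose_of_mem_same ℬ' (SetLike.coe_mem m),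
          DirectSum.decompose_of_mem_same ℬ (hgr i _ (SetLike.coe_mem m))]
      · rw [DirectSum.decompose_of_mem_ne ℬ' (SetLike.coe_mem m) h,
          DirectSum.decompose_of_mem_ne ℬ (hgr i _ (SetLike.coe_mem m)) h, map_zero]
    | add m1 m2 h1 h2 =>
      intro χ
      rw [map_add, DirectSum.decompose_add, DirectSum.decompose_add]
      simp only [DirectSum.add_apply, Submodule.coe_add, map_add, h1, h2]
  constructor
  · -- injectivity
    rw [injective_iff_map_eq_zero]
    intro b' hb'
    rw [← DirectSum.sum_support_decompose ℬ' b']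
    refine Finset.sum_eq_zero ?_
    intro χ hχ
    have h0 : α (DirectSum.decompose ℬ' b' χ : B') = 0 := by
      rw [← αcomm b' χ, hb']
      simp
    by_cases hsat : χ ∈ satWeightSet 𝒜
    · by_contra hne
      exact comp χ hsat _ (SetLike.coe_mem _) hne h0
    · exact (Submodule.eq_bot_iff _).mp (hbot' χ hsat) _
        (SetLike.coe_mem (DirectSum.decompose ℬ' b' χ))
  · -- surjectivity
    intro b
    have hR : ∀ χ, ∃ y, α y = (DirectSum.decompose ℬ b χ : B) := by
      intro χ
      by_cases hsat : χ ∈ satWeightSet 𝒜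
      · obtain ⟨u', hu'mem, hu'ne⟩ := aux_exists (hrk' χ hsat)
        have hαu'ne : α u' ≠ 0 := comp χ hsat u' hu'mem hu'ne
        have hαmem : α u' ∈ ℬ χ := hgr χ u' hu'mem
        obtain ⟨c, hc⟩ := aux_span' (hrk χ hsat) hαmem hαu'ne
          (SetLike.coe_mem (DirectSum.decompose ℬ b χ))
        exact ⟨c • u', by rw [map_smul]; exact hc.symm⟩
      · refine ⟨0, ?_⟩
        rw [map_zero]
        exact ((Submodule.eq_bot_iff _).mp (hbot χ hsat) _
          (SetLike.coe_mem (DirectSum.decompose ℬ b χ))).symm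
    choose y hy using hR
    refine ⟨∑ χ ∈ DFinsupp.support (DirectSum.decompose ℬ b), y χ, ?_⟩
    rw [map_sum]
    simp_rw [hy]
    exact DirectSum.sum_support_decompose ℬ b
end

section
/- Let (B, φ) be an affine stable toric variety over A. Then the group Γ of graded k-algebra automorphisms ψ of B satisfying ψ ∘ φ = φ (equivalently, ψ fixes the image of φ pointwise) is a finite group. -/
/-- the group of graded `k`-algebra automorphisms of an affine stable toric
variety `(B, φ)` over `A` fixing the image of `φ` pointwise is finite. -/
theorem automorphism_group_finite
    (k : Type) [Field k] [IsAlgClosed k] [CharZero k] {n : ℕ}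
    (A : Type) [CommRing A] [IsDomain A] [Algebra k A]
    (𝒜 : (Fin n → ℤ) → Submodule k A) [GradedAlgebra 𝒜]
    (hfg : Algebra.FiniteType k A)
    (B : Type) [CommRing B] [Algebra k B]
    (ℬ : (Fin n → ℤ) → Submodule k B) [GradedAlgebra ℬ]
    (φ : A →ₐ[k] B) (hastv : IsASTV 𝒜 ℬ φ) :
    {ψ : B ≃ₐ[k] B |
      (∀ (χ : Fin n → ℤ) (b : B), b ∈ ℬ χ → ψ b ∈ ℬ χ) ∧
      (∀ a : A, ψ (φ a) = φ a)}.Finite := by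
  classical
  obtain ⟨hred, hgr, hdim, hbot, s, hs⟩ := hastv
  letI : Algebra A B := φ.toRingHom.toAlgebra
  have halg : ∀ (a : A) (b : B), a • b = φ a * b := fun a b => rfl
  haveI : Module.Finite A B := by
    refine ⟨⟨s, ?_⟩⟩
    rw [eq_top_iff]
    intro b _
    obtain ⟨c, hc⟩ := hs b
    rw [hc]
    refine Submodule.sum_mem _ fun x hx => ?_
    rw [← halg]
    exact Submodule.smul_mem _ _ (Submodule.subset_span hx)
  haveI : Algebra.IsIntegral A B := Algebra.IsIntegral.of_finite A B
  -- every element of a graded piece containing a nonzero vector is a multiple of it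
  have span1 : ∀ (τ : Fin n → ℤ) (b : B), b ∈ ℬ τ → b ≠ 0 → ∀ y ∈ ℬ τ, ∃ c : k, y = c • b := by
    intro τ b hb hb0 y hy
    have hτ : τ ∈ satWeightSet 𝒜 := by
      by_contra h
      have : b ∈ (⊥ : Submodule k B) := hbot τ h ▸ hb
      exact hb0 (by simpa using this)
    have h1 : Module.finrank k (ℬ τ) = 1 := hdim τ hτ
    have hv : (⟨b, hb⟩ : ℬ τ) ≠ 0 := by simpa [Submodule.mk_eq_zero] using hb0
    obtain ⟨c, hc⟩ := (finrank_eq_one_iff_of_nonzero' (⟨b, hb⟩ : ℬ τ) hv).mp h1 ⟨y, hy⟩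
    exact ⟨c, by simpa [Subtype.ext_iff] using hc.symm⟩
  -- key: scalar of a graded automorphism on a nonzero homogeneous element is a root
  -- of a fixed nonzero polynomial
  have key : ∀ (χ : Fin n → ℤ) (g : B), g ∈ ℬ χ → g ≠ 0 →
      ∃ q : Polynomial k, q ≠ 0 ∧ ∀ (ψ : B ≃ₐ[k] B), (∀ a : A, ψ (φ a) = φ a) →
        ∀ c : k, ψ g = c • g → q.IsRoot c := by
    intro χ g hg hg0
    obtain ⟨p, hpm, hpe⟩ := Algebra.IsIntegral.isIntegral (R := A) g
    set m := p.natDegree with hmdef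
    have hgm : g ^ m ∈ ℬ (m • χ) := SetLike.pow_mem_graded m hg
    have hgm0 : g ^ m ≠ 0 := fun h => hg0 (IsReduced.eq_zero g ⟨m, h⟩)
    set π : B →ₗ[k] B :=
      (ℬ (m • χ)).subtype.comp ((DFinsupp.lapply (m • χ)).comp
        (DirectSum.decomposeAlgEquiv ℬ).toLinearMap) with hπdef
    have hπ_mem : ∀ b : B, π b ∈ ℬ (m • χ) := fun b => SetLike.coe_mem _
    have hπ_gm : π (g ^ m) = g ^ m := DirectSum.decompose_of_mem_same ℬ hgm
    have hlam : ∀ i : ℕ, ∃ l : k, π (φ (p.coeff i) * g ^ i) = l • g ^ m :=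
      fun i => span1 _ _ hgm hgm0 _ (hπ_mem _)
    choose lam hlam using hlam
    refine ⟨Polynomial.X ^ m + ∑ i ∈ Finset.range m, Polynomial.C (lam i) * Polynomial.X ^ i,
      ?_, ?_⟩
    · intro h
      have hco := congrArg (fun q : Polynomial k => q.coeff m) h
      simp only [Polynomial.coeff_add, Polynomial.coeff_X_pow, Polynomial.finset_sum_coeff,
        Polynomial.coeff_C_mul, Polynomial.coeff_zero, if_pos rfl] at hco
      rw [Finset.sum_eq_zero (fun i hi => ?_)] at hco
      · simpa using hco
      · have : m ≠ i := (Finset.mem_range.mp hi).ne'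
        simp [Polynomial.coeff_X_pow, this]
    · intro ψ hfix c hcg
      have E0 : ∑ i ∈ Finset.range (m + 1), φ (p.coeff i) * g ^ i = 0 := by
        have h0 : (Polynomial.aeval g) p = 0 := by
          rw [Polynomial.aeval_def]; exact hpe
        rw [Polynomial.aeval_eq_sum_range] at h0
        simpa [halg] using h0
      have E1 : ∑ i ∈ Finset.range (m + 1), c ^ i • (φ (p.coeff i) * g ^ i) = 0 := by
        calc ∑ i ∈ Finset.range (m + 1), c ^ i • (φ (p.coeff i) * g ^ i)
            = ∑ i ∈ Finset.range (m + 1), ψ (φ (p.coeff i) * g ^ i) := by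
              refine Finset.sum_congr rfl fun i _ => ?_
              rw [map_mul, hfix, map_pow, hcg, smul_pow, mul_smul_comm]
          _ = ψ (∑ i ∈ Finset.range (m + 1), φ (p.coeff i) * g ^ i) := (map_sum ψ _ _).symm
          _ = 0 := by rw [E0, map_zero]
      have E2 : ∑ i ∈ Finset.range (m + 1), c ^ i • π (φ (p.coeff i) * g ^ i) = 0 := by
        have h2 := congrArg π E1
        rw [map_sum, map_zero] at h2
        simpa only [map_smul] using h2
      rw [Finset.sum_range_succ] at E2
      have hmc : φ (p.coeff m) = 1 := by rw [hpm.coeff_natDegree, map_one]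
      rw [hmc, one_mul, hπ_gm] at E2
      have E3 : (∑ i ∈ Finset.range m, c ^ i * lam i + c ^ m) • g ^ m = 0 := by
        rw [add_smul, Finset.sum_smul, ← E2]
        congr 1
        refine Finset.sum_congr rfl fun i _ => ?_
        rw [hlam i, smul_smul]
      have hcoef : (∑ i ∈ Finset.range m, c ^ i * lam i + c ^ m) = 0 := by
        by_contra hne
        apply hgm0
        have := congrArg (fun z : B =>
          (∑ i ∈ Finset.range m, c ^ i * lam i + c ^ m)⁻¹ • z) E3
        simpa [smul_smul, inv_mul_cancel₀ hne] using this
      have : Polynomial.eval c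
          (Polynomial.X ^ m + ∑ i ∈ Finset.range m, Polynomial.C (lam i) * Polynomial.X ^ i)
          = ∑ i ∈ Finset.range m, c ^ i * lam i + c ^ m := by
        rw [Polynomial.eval_add, Polynomial.eval_pow, Polynomial.eval_X,
          Polynomial.eval_finset_sum, add_comm]
        congr 1
        refine Finset.sum_congr rfl fun i _ => ?_
        rw [Polynomial.eval_mul, Polynomial.eval_C, Polynomial.eval_pow, Polynomial.eval_X,
          mul_comm]
      exact (Polynomial.IsRoot.def).mpr (this.trans hcoef)
  -- the finite data determining an automorphism
  set T : Finset (Fin n → ℤ) := s.biUnion (fun x => DFinsupp.support (DirectSum.decompose ℬ x))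
    with hTdef
  set gc : B → (Fin n → ℤ) → B := fun x χ => ((DirectSum.decompose ℬ x) χ : B) with hgcdef
  have hgc_mem : ∀ x χ, gc x χ ∈ ℬ χ := fun x χ => SetLike.coe_mem _
  set SET := {ψ : B ≃ₐ[k] B |
      (∀ (χ : Fin n → ℤ) (b : B), b ∈ ℬ χ → ψ b ∈ ℬ χ) ∧
      (∀ a : A, ψ (φ a) = φ a)} with hSET
  have exc : ∀ ψ ∈ SET, ∀ (x : B) (χ : Fin n → ℤ),
      ∃ c : k, ψ (gc x χ) = c • gc x χ ∧ (gc x χ = 0 → c = 0) := by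
    intro ψ hψ x χ
    by_cases h0 : gc x χ = 0
    · exact ⟨0, by simp [h0], fun _ => rfl⟩
    · obtain ⟨c, hc⟩ := span1 χ _ (hgc_mem x χ) h0 (ψ (gc x χ)) (hψ.1 χ _ (hgc_mem x χ))
      exact ⟨c, hc, fun h => absurd h h0⟩
  set F : (B ≃ₐ[k] B) → (↥s × ↥T → k) := fun ψ p =>
    if h : ∃ c : k, ψ (gc (p.1 : B) (p.2 : Fin n → ℤ)) = c • gc (p.1 : B) (p.2 : Fin n → ℤ) ∧
        (gc (p.1 : B) (p.2 : Fin n → ℤ) = 0 → c = 0) then h.choose else 0 with hFdef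
  have hinj : Set.InjOn F SET := by
    intro ψ₁ h₁ ψ₂ h₂ hF
    have hgceq : ∀ (x : B), x ∈ s → ∀ (χ : Fin n → ℤ), ψ₁ (gc x χ) = ψ₂ (gc x χ) := by
      intro x hx χ
      by_cases hχ : χ ∈ T
      · have he₁ := exc ψ₁ h₁ x χ
        have he₂ := exc ψ₂ h₂ x χ
        have e₁ : F ψ₁ (⟨x, hx⟩, ⟨χ, hχ⟩) = he₁.choose := dif_pos he₁
        have e₂ : F ψ₂ (⟨x, hx⟩, ⟨χ, hχ⟩) = he₂.choose := dif_pos he₂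
        have : he₁.choose = he₂.choose := by
          rw [← e₁, ← e₂, hF]
        rw [he₁.choose_spec.1, he₂.choose_spec.1, this]
      · have : gc x χ = 0 := by
          by_contra h0
          exact hχ (Finset.mem_biUnion.mpr ⟨x, hx,
            DFinsupp.mem_support_iff.mpr (fun hz => h0 (by rw [hgcdef]; simp [hz]))⟩)
        rw [this, map_zero, map_zero]
    have hxs : ∀ x ∈ s, ψ₁ x = ψ₂ x := by
      intro x hx
      conv_lhs => rw [← DirectSum.sum_support_decompose ℬ x]
      conv_rhs => rw [← DirectSum.sum_support_decompose ℬ x]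
      rw [map_sum, map_sum]
      exact Finset.sum_congr rfl fun χ _ => hgceq x hx χ
    apply AlgEquiv.ext
    intro b
    obtain ⟨c, hc⟩ := hs b
    rw [hc, map_sum, map_sum]
    refine Finset.sum_congr rfl fun x hx => ?_
    rw [map_mul, map_mul, h₁.2, h₂.2, hxs x hx]
  set V : ↥s × ↥T → Set k := fun p =>
    {c | c = 0 ∨ (gc (p.1 : B) (p.2 : Fin n → ℤ) ≠ 0 ∧
      ∃ ψ ∈ SET, ψ (gc (p.1 : B) (p.2 : Fin n → ℤ)) = c • gc (p.1 : B) (p.2 : Fin n → ℤ))}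
    with hVdef
  have hVfin : ∀ p, (V p).Finite := by
    intro p
    by_cases h0 : gc (p.1 : B) (p.2 : Fin n → ℤ) = 0
    · refine Set.Finite.subset (Set.finite_singleton 0) ?_
      intro c hc
      rcases hc with hc | hc
      · simpa using hc
      · exact absurd h0 hc.1
    · obtain ⟨q, hq0, hq⟩ := key (p.2 : Fin n → ℤ) _ (hgc_mem _ _) h0
      refine Set.Finite.subset ((Polynomial.finite_setOf_isRoot hq0).insert 0) ?_
      intro c hc
      rcases hc with hc | ⟨_, ψ, hψ, hcg⟩
      · exact Set.mem_insert_iff.mpr (Or.inl hc)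
      · exact Set.mem_insert_iff.mpr (Or.inr (hq ψ hψ.2 c hcg))
  have himg : F '' SET ⊆ Set.pi Set.univ V := by
    rintro _ ⟨ψ, hψ, rfl⟩ p _
    have he := exc ψ hψ (p.1 : B) (p.2 : Fin n → ℤ)
    have e : F ψ p = he.choose := by
      rw [hFdef]; exact dif_pos he
    rw [e]
    by_cases h0 : gc (p.1 : B) (p.2 : Fin n → ℤ) = 0
    · exact Or.inl (he.choose_spec.2 h0)
    · exact Or.inr ⟨h0, ψ, hψ, he.choose_spec.1⟩
  exact Set.Finite.of_finite_image
    (Set.Finite.subset (Set.Finite.pi hVfin) himg) hinj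
end

section
/- There exists a positive integer N, depending only on A, such that for every affine stable toric variety (B, φ) over A and every graded k-algebra automorphism ψ of B with ψ ∘ φ = φ, one has ψ^N = id_B. -/
open DirectSum Polynomial in
theorem sat_bound' {n : ℕ} (H : Submodule ℤ (Fin n → ℤ)) :
    ∃ N : ℕ, 0 < N ∧ ∀ χ : Fin n → ℤ,
      (∃ m : ℕ, 0 < m ∧ (m : ℤ) • χ ∈ H) → (N : ℤ) • χ ∈ H := by
  classical
  let Hsat : Submodule ℤ (Fin n → ℤ) :=
    { carrier := {χ | ∃ m : ℕ, 0 < m ∧ (m : ℤ) • χ ∈ H}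
      zero_mem' := ⟨1, one_pos, by simp⟩
      add_mem' := by
        rintro x y ⟨m, hm, hmx⟩ ⟨m', hm', hmy⟩
        refine ⟨m * m', Nat.mul_pos hm hm', ?_⟩
        have h1 : ((m * m' : ℕ) : ℤ) • x ∈ H := by
          push_cast; rw [mul_comm, mul_smul]; exact H.smul_mem _ hmx
        have h2 : ((m * m' : ℕ) : ℤ) • y ∈ H := by
          push_cast; rw [mul_smul]; exact H.smul_mem _ hmy
        rw [smul_add]
        exact H.add_mem h1 h2
      smul_mem' := by
        rintro c x ⟨m, hm, hmx⟩
        exact ⟨m, hm, by rw [smul_comm]; exact H.smul_mem _ hmx⟩ }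
  obtain ⟨T, hT⟩ := IsNoetherian.noetherian Hsat
  have hmem : ∀ x ∈ T, x ∈ Hsat := fun x hx => hT ▸ Submodule.subset_span hx
  let g : (Fin n → ℤ) → ℕ := fun x =>
    if h : ∃ m : ℕ, 0 < m ∧ (m : ℤ) • x ∈ H then h.choose else 1
  have hg : ∀ x, 0 < g x ∧ (x ∈ Hsat → ((g x : ℤ)) • x ∈ H) := by
    intro x
    by_cases h : ∃ m : ℕ, 0 < m ∧ (m : ℤ) • x ∈ H
    · have h1 : g x = h.choose := dif_pos h
      exact ⟨h1 ▸ h.choose_spec.1, fun _ => h1 ▸ h.choose_spec.2⟩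
    · have h1 : g x = 1 := dif_neg h
      exact ⟨h1 ▸ one_pos, fun hx => absurd hx h⟩
  refine ⟨∏ x ∈ T, g x, Finset.prod_pos fun x _ => (hg x).1, ?_⟩
  intro χ hχ
  have hχs : χ ∈ Hsat := hχ
  have hle : Hsat ≤ Submodule.comap
      (((∏ x ∈ T, g x : ℕ) : ℤ) • (LinearMap.id : (Fin n → ℤ) →ₗ[ℤ] (Fin n → ℤ))) H := by
    rw [← hT, Submodule.span_le]
    intro x hx
    obtain ⟨q, hq⟩ := Finset.dvd_prod_of_mem g hx
    simp only [Submodule.mem_comap, LinearMap.smul_apply, LinearMap.id_coe, id_eq, SetLike.mem_coe]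
    rw [hq, Nat.cast_mul, mul_comm, mul_smul]
    exact H.smul_mem _ ((hg x).2 (hmem x hx))
  have h2 := hle hχs
  simpa using h2

/-- there is a positive integer `N`, depending only on `(A, 𝒜)`, such that for
every affine stable toric variety `(B, φ)` over `A`, every graded `k`-algebra automorphism
`ψ` of `B` fixing the image of `φ` pointwise satisfies `ψ^N = id`. -/
theorem automorphisms_uniformly_annihilated
    (k : Type) [Field k] [IsAlgClosed k] [CharZero k] {n : ℕ}
    (A : Type) [CommRing A] [IsDomain A] [Algebra k A]
    (𝒜 : (Fin n → ℤ) → Submodule k A) [GradedAlgebra 𝒜]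
    (hfg : Algebra.FiniteType k A) :
    ∃ N : ℕ, 0 < N ∧
      ∀ (B : Type) [CommRing B] [Algebra k B]
        (ℬ : (Fin n → ℤ) → Submodule k B) [GradedAlgebra ℬ] (φ : A →ₐ[k] B),
        IsASTV 𝒜 ℬ φ →
          ∀ ψ : B ≃ₐ[k] B,
            (∀ (χ : Fin n → ℤ) (b : B), b ∈ ℬ χ → ψ b ∈ ℬ χ) →
            (∀ a : A, ψ (φ a) = φ a) →
            ψ ^ N = 1 := by
  classical
  -- homogeneous generators of A
  obtain ⟨s, hs⟩ := hfg.out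
  let ι := Σ x : {a : A // a ∈ s},
    {μ : Fin n → ℤ // μ ∈ DFinsupp.support (DirectSum.decompose 𝒜 (x : A))}
  let w : ι → (Fin n → ℤ) := fun t => t.2
  let f : ι → A := fun t => (DirectSum.decompose 𝒜 (t.1 : A) t.2 : A)
  have hfmem : ∀ t, f t ∈ 𝒜 (w t) := fun t => (DirectSum.decompose 𝒜 (t.1 : A) t.2).2
  have hadj : Algebra.adjoin k (Set.range f) = ⊤ := by
    rw [eq_top_iff, ← hs, Algebra.adjoin_le_iff]
    intro a ha
    rw [← DirectSum.sum_support_decompose 𝒜 a]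
    exact Subalgebra.sum_mem _ fun μ hμ =>
      Algebra.subset_adjoin ⟨⟨⟨a, ha⟩, ⟨μ, hμ⟩⟩, rfl⟩
  -- the uniform bound
  choose NI hNIpos hNIspec using
    fun I : Finset ι => sat_bound' (Submodule.span ℤ ((I.image w : Finset (Fin n → ℤ)) : Set (Fin n → ℤ)))
  refine ⟨∏ I : Finset ι, NI I, Finset.prod_pos fun I _ => hNIpos I, ?_⟩
  set N := ∏ I : Finset ι, NI I with hN
  intro B _ _ ℬ _ φ hASTV ψ hgr hfix
  obtain ⟨hred, hφgr, hdim, hbot, sB, hspan⟩ := hASTV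
  -- basic facts
  have h0sat : (0 : Fin n → ℤ) ∈ satWeightSet 𝒜 := by
    refine ⟨1, one_pos, ?_⟩
    rw [one_smul]
    intro h
    have h1 : (1 : A) ∈ 𝒜 0 := SetLike.one_mem_graded 𝒜
    rw [h, Submodule.mem_bot] at h1
    exact one_ne_zero h1
  have hBnt : Nontrivial B := by
    by_contra h
    have hsub : Subsingleton B := not_nontrivial_iff_subsingleton.mp h
    haveI : Subsingleton (ℬ 0) := ⟨fun a b => Subtype.ext (Subsingleton.elim _ _)⟩
    have := hdim 0 h0sat
    rw [Module.finrank_zero_of_subsingleton] at this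
    exact one_ne_zero this.symm
  haveI := hBnt
  haveI := hred
  -- scalar cancellation
  have CAN : ∀ (c : k) (y : B), y ≠ 0 → c • y = y → c = 1 := by
    intro c y hy h
    have h2 : (c - 1) • y = 0 := by rw [sub_smul, one_smul, h, sub_self]
    rcases smul_eq_zero.mp h2 with h1 | h1
    · exact sub_eq_zero.mp h1
    · exact absurd h1 hy
  -- eigenvalue on one-dimensional pieces
  have E : ∀ (μ : Fin n → ℤ) (z : B), z ∈ ℬ μ → z ≠ 0 →
      ∃ c : k, ∀ z' ∈ ℬ μ, ψ z' = c • z' := by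
    intro μ z hz hz0
    have hμ : μ ∈ satWeightSet 𝒜 := by
      by_contra h
      rw [hbot μ h, Submodule.mem_bot] at hz
      exact hz0 hz
    obtain ⟨v, hv0, hv⟩ := finrank_eq_one_iff'.mp (hdim μ hμ)
    obtain ⟨c, hc⟩ := hv ⟨ψ v, hgr μ v v.2⟩
    have hcv : c • (v : B) = ψ (v : B) := congrArg Subtype.val hc
    refine ⟨c, fun z' hz' => ?_⟩
    obtain ⟨d, hd⟩ := hv ⟨z', hz'⟩
    have hdv : d • (v : B) = z' := congrArg Subtype.val hd
    rw [← hdv, map_smul, ← hcv, smul_comm c d]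
  -- pieces hit by φ are fixed
  have FIX : ∀ (μ : Fin n → ℤ) (a : A), a ∈ 𝒜 μ → φ a ≠ 0 →
      ∀ z ∈ ℬ μ, ψ z = z := by
    intro μ a ha ha0 z hz
    obtain ⟨c, hc⟩ := E μ (φ a) (hφgr μ a ha) ha0
    have h1 : φ a = c • φ a := by rw [← hc _ (hφgr μ a ha), hfix a]
    have hc1 : c = 1 := CAN c (φ a) ha0 h1.symm
    rw [hc _ hz, hc1, one_smul]
  -- module-finiteness and integrality
  let R : Subalgebra k B := φ.range
  have hfin : Submodule.span R ((sB : Finset B) : Set B) = ⊤ := by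
    rw [eq_top_iff]
    intro x _
    obtain ⟨c, hc⟩ := hspan x
    rw [hc]
    refine Submodule.sum_mem _ fun y hy => ?_
    have h1 : φ (c y) * y = (⟨φ (c y), ⟨c y, rfl⟩⟩ : R) • y := rfl
    rw [h1]
    exact Submodule.smul_mem _ _ (Submodule.subset_span hy)
  haveI : Module.Finite R B := ⟨⟨sB, hfin⟩⟩
  -- φ commutes with projections
  have PD : ∀ (μ : Fin n → ℤ) (a : A),
      φ ((DirectSum.decompose 𝒜 a μ : A)) = (DirectSum.decompose ℬ (φ a) μ : B) := by
    intro μ a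
    refine DirectSum.Decomposition.inductionOn 𝒜
      (motive := fun a => φ ((DirectSum.decompose 𝒜 a μ : A)) = (DirectSum.decompose ℬ (φ a) μ : B))
      ?_ ?_ ?_ a
    · simp
    · intro i m
      by_cases h : i = μ
      · subst h
        rw [DirectSum.decompose_of_mem_same 𝒜 m.2,
          DirectSum.decompose_of_mem_same ℬ (hφgr i m m.2)]
      · rw [DirectSum.decompose_of_mem_ne 𝒜 m.2 h,
          DirectSum.decompose_of_mem_ne ℬ (hφgr i m m.2) h, map_zero]
    · intro x y hx hy
      simp only [map_add, DirectSum.decompose_add, DirectSum.add_apply,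
        Submodule.coe_add, hx, hy]
  -- main claim: ψ^N is identity on each graded piece
  have main : ∀ (χ : Fin n → ℤ) (x : B), x ∈ ℬ χ → (ψ ^ N) x = x := by
    intro χ x hx
    by_cases hχ : χ ∈ satWeightSet 𝒜
    swap
    · rw [hbot χ hχ, Submodule.mem_bot] at hx
      rw [hx, map_zero]
    obtain ⟨v, hv0, hv⟩ := finrank_eq_one_iff'.mp (hdim χ hχ)
    set b : B := (v : B) with hbdef
    have hbmem : b ∈ ℬ χ := v.2
    have hb0 : b ≠ 0 := fun h => hv0 (Subtype.ext h)
    obtain ⟨lam, hlam⟩ := E χ b hbmem hb0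
    -- a prime avoiding b
    obtain ⟨P, hP, hbP⟩ : ∃ P : Ideal B, P.IsPrime ∧ b ∉ P := by
      have h1 : b ∉ nilradical B := by
        rw [mem_nilradical]
        intro h
        exact hb0 (h.eq_zero)
      rw [nilradical_eq_sInf, Submodule.mem_sInf] at h1
      push_neg at h1
      obtain ⟨P, hP1, hP2⟩ := h1
      exact ⟨P, hP1, hP2⟩
    have h1P : (1 : B) ∉ P := fun h => hP.ne_top ((Ideal.eq_top_iff_one P).mpr h)
    -- surviving generators
    set I : Finset ι := Finset.univ.filter (fun t => φ (f t) ∉ P) with hIdef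
    set M : AddSubmonoid (Fin n → ℤ) :=
      AddSubmonoid.closure ((I.image w : Finset (Fin n → ℤ)) : Set (Fin n → ℤ)) with hMdef
    set H : Submodule ℤ (Fin n → ℤ) :=
      Submodule.span ℤ ((I.image w : Finset (Fin n → ℤ)) : Set (Fin n → ℤ)) with hHdef
    have hMH : ∀ y ∈ M, y ∈ H :=
      fun y hy => AddSubmonoid.closure_le.mpr Submodule.subset_span hy
    -- realization of monoid elements
    have hreal : ∀ u ∈ M, ∃ a : A, a ∈ 𝒜 u ∧ φ a ∉ P := by
      intro u hu
      have hle : M ≤ {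
          carrier := {u | ∃ a : A, a ∈ 𝒜 u ∧ φ a ∉ P}
          zero_mem' := ⟨1, SetLike.one_mem_graded 𝒜, by rw [map_one]; exact h1P⟩
          add_mem' := by
            rintro x y ⟨a, ha, haP⟩ ⟨a', ha', ha'P⟩
            refine ⟨a * a', SetLike.mul_mem_graded ha ha', ?_⟩
            rw [map_mul]
            intro h
            exact ((hP.mem_or_mem h).elim haP ha'P) } := by
        rw [hMdef]
        refine AddSubmonoid.closure_le.mpr ?_
        intro y hy
        simp only [Finset.coe_image, Set.mem_image, Finset.mem_coe] at hy
        obtain ⟨t, ht, rfl⟩ := hy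
        rw [hIdef, Finset.mem_filter] at ht
        exact ⟨f t, hfmem t, ht.2⟩
      exact hle hu
    -- weights of homogeneous elements surviving P lie in M
    have hW : ∀ (μ : Fin n → ℤ) (a : A), a ∈ 𝒜 μ → φ a ∉ P → μ ∈ M := by
      intro μ a ha haP
      have hamem : a ∈ Submodule.span k ((Submonoid.closure (Set.range f) : Submonoid A) : Set A) := by
        have h1 : a ∈ Subalgebra.toSubmodule (Algebra.adjoin k (Set.range f)) := by
          rw [hadj]; trivial
        rwa [Algebra.adjoin_eq_span] at h1
      have CL : ∀ g ∈ Submonoid.closure (Set.range f),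
          ∃ ν, g ∈ 𝒜 ν ∧ (φ g ∉ P → ν ∈ M) := by
        intro g hg
        have hle : Submonoid.closure (Set.range f) ≤ {
            carrier := {g | ∃ ν, g ∈ 𝒜 ν ∧ (φ g ∉ P → ν ∈ M)}
            one_mem' := ⟨0, SetLike.one_mem_graded 𝒜, fun _ => M.zero_mem⟩
            mul_mem' := by
              rintro x y ⟨ν, hν, hνM⟩ ⟨ν', hν', hν'M⟩
              refine ⟨ν + ν', SetLike.mul_mem_graded hν hν', fun hxy => ?_⟩
              rw [map_mul] at hxy
              have hx : φ x ∉ P := fun h => hxy (Ideal.mul_mem_right _ _ h)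
              have hy : φ y ∉ P := fun h => hxy (Ideal.mul_mem_left _ _ h)
              exact M.add_mem (hνM hx) (hν'M hy) } := by
          refine Submonoid.closure_le.mpr ?_
          rintro g ⟨t, rfl⟩
          refine ⟨w t, hfmem t, fun hgP => ?_⟩
          refine AddSubmonoid.subset_closure ?_
          simp only [Finset.coe_image, Set.mem_image, Finset.mem_coe]
          exact ⟨t, by rw [hIdef, Finset.mem_filter]; exact ⟨Finset.mem_univ t, hgP⟩, rfl⟩
        exact hle hg
      have Q : ∀ x ∈ Submodule.span k ((Submonoid.closure (Set.range f) : Submonoid A) : Set A),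
          φ ((DirectSum.decompose 𝒜 x μ : A)) ∈ P ∨ μ ∈ M := by
        intro x hxmem
        induction hxmem using Submodule.span_induction with
        | mem g hg =>
          obtain ⟨ν, hν, himp⟩ := CL g hg
          by_cases h : ν = μ
          · subst h
            rw [DirectSum.decompose_of_mem_same 𝒜 hν]
            by_cases h2 : φ g ∈ P
            · exact Or.inl h2
            · exact Or.inr (himp h2)
          · rw [DirectSum.decompose_of_mem_ne 𝒜 hν h, map_zero]
            exact Or.inl P.zero_mem
        | zero =>
          simp only [DirectSum.decompose_zero, DirectSum.zero_apply,
            ZeroMemClass.coe_zero, map_zero]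
          exact Or.inl P.zero_mem
        | add x y hxm hym ihx ihy =>
          rcases ihx with ihx | ihx
          swap
          · exact Or.inr ihx
          rcases ihy with ihy | ihy
          swap
          · exact Or.inr ihy
          left
          rw [DirectSum.decompose_add]
          simp only [DirectSum.add_apply, Submodule.coe_add, map_add]
          exact P.add_mem ihx ihy
        | smul c x hxm ih =>
          rcases ih with ih | ih
          swap
          · exact Or.inr ih
          left
          have hds : (DirectSum.decompose 𝒜 (c • x) μ : A)
              = c • (DirectSum.decompose 𝒜 x μ : A) := by
            rw [DirectSum.decompose_smul]
            rfl
          rw [hds, map_smul, Algebra.smul_def]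
          exact Ideal.mul_mem_left _ _ ih
      rcases Q a hamem with h | h
      · rw [DirectSum.decompose_of_mem_same 𝒜 ha] at h
        exact absurd h haP
      · exact h
    -- elements of H are differences of elements of M
    have hdiff : ∀ y ∈ H, ∃ u ∈ M, ∃ u' ∈ M, y = u - u' := by
      let D : AddSubgroup (Fin n → ℤ) :=
        { carrier := {y | ∃ u ∈ M, ∃ u' ∈ M, y = u - u'}
          zero_mem' := ⟨0, M.zero_mem, 0, M.zero_mem, by simp⟩
          add_mem' := by
            rintro x y ⟨u, hu, u', hu', rfl⟩ ⟨u2, hu2, u2', hu2', rfl⟩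
            exact ⟨u + u2, M.add_mem hu hu2, u' + u2', M.add_mem hu' hu2', by abel⟩
          neg_mem' := by
            rintro x ⟨u, hu, u', hu', rfl⟩
            exact ⟨u', hu', u, hu, by abel⟩ }
      have hle : H ≤ AddSubgroup.toIntSubmodule D := by
        rw [hHdef, Submodule.span_le]
        intro y hy
        exact ⟨y, AddSubmonoid.subset_closure hy, 0, M.zero_mem, by simp⟩
      exact fun y hy => hle hy
    -- KEY: homogeneous elements surviving P with weight in H are fixed by ψ
    have hkey : ∀ (μ : Fin n → ℤ) (z : B), z ∈ ℬ μ → z ∉ P → μ ∈ H → ψ z = z := by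
      intro μ z hzμ hzP hμH
      have hz0 : z ≠ 0 := fun h => hzP (h ▸ P.zero_mem)
      obtain ⟨u, hu, u', hu', huv⟩ := hdiff μ hμH
      obtain ⟨au, hau, hauP⟩ := hreal u hu
      obtain ⟨av, hav, havP⟩ := hreal u' hu'
      obtain ⟨c, hc⟩ := E μ z hzμ hz0
      have hmemu : z * φ av ∈ ℬ u := by
        have h2 := SetLike.mul_mem_graded hzμ (hφgr _ _ hav)
        have h3 : μ + u' = u := by rw [huv]; abel
        rwa [h3] at h2
      have hnP : z * φ av ∉ P := fun h => ((hP.mem_or_mem h).elim hzP havP)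
      have hn0 : z * φ av ≠ 0 := fun h => hnP (h ▸ P.zero_mem)
      have h1 : ψ (z * φ av) = z * φ av :=
        FIX u au hau (fun h => hauP (h ▸ P.zero_mem)) _ hmemu
      have h2 : ψ (z * φ av) = c • (z * φ av) := by
        rw [map_mul, hc z hzμ, hfix av, smul_mul_assoc]
      have hc1 : c = 1 := CAN c _ hn0 (by rw [← h2, h1])
      rw [hc z hzμ, hc1, one_smul]
    -- integral equation for b
    have hbInt : IsIntegral R b := Algebra.IsIntegral.isIntegral (R := R) b
    obtain ⟨p, hpm, hpe⟩ := hbInt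
    set m := p.natDegree with hmdef
    have hsum : ∑ i ∈ Finset.range (m + 1), p.coeff i • b ^ i = 0 := by
      rw [← Polynomial.aeval_eq_sum_range, Polynomial.aeval_def, hpe]
    rw [Finset.sum_range_succ] at hsum
    have hlead : p.coeff m • b ^ m = b ^ m := by
      rw [hmdef, hpm.coeff_natDegree, one_smul]
    rw [hlead] at hsum
    -- choose preimages of coefficients
    have hcoeff : ∀ i : ℕ, ∃ a : A, φ a = (p.coeff i : B) :=
      fun i => (p.coeff i).2
    choose ai hai using hcoeff
    -- project the equation to weight m • χ
    have hbi : ∀ i : ℕ, b ^ i ∈ ℬ (i • χ) := fun i => SetLike.pow_mem_graded i hbmem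
    have key_i : ∀ i, i < m →
        (DirectSum.decompose ℬ ((p.coeff i : B) * b ^ i) (m • χ) : B) =
          φ ((DirectSum.decompose 𝒜 (ai i) ((m - i) • χ) : A)) * b ^ i := by
      intro i hi
      have hidx : m • χ = (m - i) • χ + i • χ := by
        rw [← add_smul, Nat.sub_add_cancel hi.le]
      rw [hidx, DirectSum.coe_decompose_mul_add_of_right_mem ℬ (hbi i), ← hai i, PD]
    have hsmul : ∀ i : ℕ, p.coeff i • b ^ i = (p.coeff i : B) * b ^ i := fun i => rfl
    have hproj : (DirectSum.decompose ℬ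
        ((∑ i ∈ Finset.range m, p.coeff i • b ^ i) + b ^ m) (m • χ) : B) = 0 := by
      rw [hsum]; simp
    rw [DirectSum.decompose_add, DirectSum.decompose_sum] at hproj
    simp only [DirectSum.add_apply, Submodule.coe_add] at hproj
    rw [DirectSum.decompose_of_mem_same ℬ (hbi m)] at hproj
    have hsum2 : ((∑ i ∈ Finset.range m, DirectSum.decompose ℬ (p.coeff i • b ^ i)) (m • χ) : B)
        = ∑ i ∈ Finset.range m,
          φ ((DirectSum.decompose 𝒜 (ai i) ((m - i) • χ) : A)) * b ^ i := by
      rw [DFinsupp.finset_sum_apply]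
      rw [AddSubmonoidClass.coe_finset_sum]
      refine Finset.sum_congr rfl fun i hi => ?_
      rw [hsmul i, key_i i (Finset.mem_range.mp hi)]
    rw [hsum2] at hproj
    -- find a surviving term
    have hbmP : b ^ m ∉ P := fun h => hbP (hP.mem_of_pow_mem m h)
    have hex : ∃ i, i < m ∧
        φ ((DirectSum.decompose 𝒜 (ai i) ((m - i) • χ) : A)) * b ^ i ∉ P := by
      by_contra h
      push_neg at h
      have hsP : ∑ i ∈ Finset.range m,
          φ ((DirectSum.decompose 𝒜 (ai i) ((m - i) • χ) : A)) * b ^ i ∈ P :=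
        Submodule.sum_mem _ fun i hi => h i (Finset.mem_range.mp hi)
      have : b ^ m ∈ P := by
        have h2 : b ^ m = -(∑ i ∈ Finset.range m,
            φ ((DirectSum.decompose 𝒜 (ai i) ((m - i) • χ) : A)) * b ^ i) := by
          rw [eq_neg_iff_add_eq_zero, add_comm]
          exact hproj
        rw [h2]
        exact P.neg_mem hsP
      exact hbmP this
    obtain ⟨i0, hi0, hi0P⟩ := hex
    have hφd : φ ((DirectSum.decompose 𝒜 (ai i0) ((m - i0) • χ) : A)) ∉ P :=
      fun h => hi0P (Ideal.mul_mem_right _ _ h)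
    have hjM : ((m - i0) • χ) ∈ M :=
      hW _ _ (DirectSum.decompose 𝒜 (ai i0) ((m - i0) • χ)).2 hφd
    -- N • χ ∈ H
    have hNIχ : ((NI I : ℤ)) • χ ∈ H := by
      refine hNIspec I χ ⟨m - i0, Nat.sub_pos_of_lt hi0, ?_⟩
      rw [Nat.cast_smul_eq_nsmul]
      exact hMH _ hjM
    have hNχ : ((N : ℤ)) • χ ∈ H := by
      obtain ⟨q, hq⟩ := Finset.dvd_prod_of_mem NI (Finset.mem_univ I)
      rw [hN, hq, Nat.cast_mul, mul_comm, mul_smul]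
      exact H.smul_mem _ hNIχ
    have hNχ' : (N • χ) ∈ H := by
      rwa [Nat.cast_smul_eq_nsmul] at hNχ
    -- conclude lam ^ N = 1
    have hbN0 : b ^ N ∉ P := fun h => hbP (hP.mem_of_pow_mem N h)
    have hψbN : ψ (b ^ N) = b ^ N :=
      hkey (N • χ) (b ^ N) (SetLike.pow_mem_graded N hbmem) hbN0 hNχ'
    have h2 : ψ (b ^ N) = lam ^ N • b ^ N := by
      rw [map_pow, hlam b hbmem, _root_.smul_pow]
    have hbNne : b ^ N ≠ 0 := by
      intro h
      rw [h] at hbN0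
      exact hbN0 P.zero_mem
    have hlamN : lam ^ N = 1 :=
      CAN _ _ hbNne (by rw [← h2, hψbN])
    -- iterate
    have hiter : ∀ (j : ℕ) (y : B), y ∈ ℬ χ → (ψ ^ j) y = lam ^ j • y := by
      intro j
      induction j with
      | zero => intro y hy; simp
      | succ j ih =>
        intro y hy
        rw [pow_succ, AlgEquiv.mul_apply, hlam y hy, map_smul, ih y hy,
          pow_succ, mul_comm, mul_smul]
    rw [hiter N x hx, hlamN, one_smul]
  -- conclude
  have hone : ∀ x : B, (ψ ^ N) x = x := by
    intro x
    refine DirectSum.Decomposition.inductionOn ℬ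
      (motive := fun x => (ψ ^ N) x = x) (map_zero _) ?_ ?_ x
    · intro i m
      exact main i m m.2
    · intro x y hx hy
      rw [map_add, hx, hy]
  exact AlgEquiv.ext fun x => (hone x).trans (AlgEquiv.one_apply x).symm
end

section
/- Let Λ be a quasifan in ℚⁿ. Then the quasifan algebra k[Λ] is reduced, i.e., has no nonzero nilpotent elements. -/
/-- A convex cone in `ℚⁿ`: contains `0` and is closed under addition and under
multiplication by nonnegative rational scalars. -/
def IsCone {n : ℕ} (c : Set (Fin n → ℚ)) : Prop :=
  (0 : Fin n → ℚ) ∈ c ∧ (∀ x ∈ c, ∀ y ∈ c, x + y ∈ c) ∧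
    ∀ q : ℚ, 0 ≤ q → ∀ x ∈ c, q • x ∈ c

/-- `μ` is a face of the convex cone `c`: a convex subcone such that whenever a sum of two
elements of `c` lies in `μ`, both summands lie in `μ`. -/
def IsFace {n : ℕ} (μ c : Set (Fin n → ℚ)) : Prop :=
  IsCone μ ∧ μ ⊆ c ∧ ∀ x ∈ c, ∀ y ∈ c, x + y ∈ μ → x ∈ μ ∧ y ∈ μ

/-- A quasifan in `ℚⁿ`: a finite collection of convex cones, closed under passing to faces,
such that the intersection of any two of its cones is a face of each of them. -/
def IsQuasifan {n : ℕ} (Λ : Set (Set (Fin n → ℚ))) : Prop :=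
  Λ.Finite ∧ (∀ c ∈ Λ, IsCone c) ∧ (∀ c ∈ Λ, ∀ μ, IsFace μ c → μ ∈ Λ) ∧
    ∀ c ∈ Λ, ∀ c' ∈ Λ, IsFace (c ∩ c') c ∧ IsFace (c ∩ c') c'

/-- The lattice points of the support `|Λ| = ⋃₀ Λ` of a quasifan. -/
def QLat {n : ℕ} (Λ : Set (Set (Fin n → ℚ))) : Type :=
  {χ : Fin n → ℤ // embQ χ ∈ ⋃₀ Λ}

theorem embQ_add {n : ℕ} (a b : Fin n → ℤ) : embQ (a + b) = embQ a + embQ b := by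
  funext i; simp [embQ]

/-- If `χ₁` and `χ₂` lie (after embedding) in a common cone of the quasifan `Λ`, then
`χ₁ + χ₂` is a lattice point of the support of `Λ`. -/
theorem embQ_add_mem_support {n : ℕ} {Λ : Set (Set (Fin n → ℚ))} (hΛ : IsQuasifan Λ)
    {χ₁ χ₂ : Fin n → ℤ} (h : ∃ c ∈ Λ, embQ χ₁ ∈ c ∧ embQ χ₂ ∈ c) :
    embQ (χ₁ + χ₂) ∈ ⋃₀ Λ := by
  obtain ⟨c, hc, h1, h2⟩ := h
  exact ⟨c, hc, (embQ_add χ₁ χ₂) ▸ (hΛ.2.1 c hc).2.1 _ h1 _ h2⟩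

set_option maxHeartbeats 1000000 in
/-- the quasifan algebra `k[Λ]` of a quasifan `Λ` in `ℚⁿ` — presented as any
commutative `k`-algebra `C` with a basis `(x^χ)` indexed by the lattice points of `|Λ|`
satisfying the quasifan multiplication rule — is reduced. -/
theorem quasifan_algebra_isReduced {n : ℕ} (k : Type) [Field k]
    (Λ : Set (Set (Fin n → ℚ))) (hΛ : IsQuasifan Λ)
    (C : Type) [CommRing C] [Algebra k C] (x : Module.Basis (QLat Λ) k C)
    (hmul : ∀ (χ₁ χ₂ : QLat Λ) (h : ∃ c ∈ Λ, embQ χ₁.1 ∈ c ∧ embQ χ₂.1 ∈ c),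
      x χ₁ * x χ₂ = x ⟨χ₁.1 + χ₂.1, embQ_add_mem_support hΛ h⟩)
    (hmul0 : ∀ χ₁ χ₂ : QLat Λ, (¬ ∃ c ∈ Λ, embQ χ₁.1 ∈ c ∧ embQ χ₂.1 ∈ c) →
      x χ₁ * x χ₂ = 0)
    (hone : ∀ h0 : embQ (0 : Fin n → ℤ) ∈ ⋃₀ Λ, x ⟨0, h0⟩ = 1) :
    IsReduced C := by
    classical
  -- The comparison ring: for each cone of `Λ`, a copy of the group algebra `k[ℤⁿ]`.
  set A := AddMonoidAlgebra k (Fin n → ℤ) with hA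
  -- the coefficient assignment for the cone `σ`
  let g : Λ → QLat Λ → A := fun σ χ =>
    if embQ χ.1 ∈ σ.1 then AddMonoidAlgebra.single χ.1 (1 : k) else 0
  let L : (σ : Λ) → C →ₗ[k] A := fun σ => x.constr k (g σ)
  have hLx : ∀ (σ : Λ) (χ : QLat Λ), L σ (x χ) = g σ χ := fun σ χ => x.constr_basis k _ χ
  -- key multiplicativity on basis elements
  have key : ∀ (σ : Λ) (χ₁ χ₂ : QLat Λ), L σ (x χ₁ * x χ₂) = L σ (x χ₁) * L σ (x χ₂) := by
    rintro ⟨σ, hσ⟩ χ₁ χ₂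
    by_cases h : ∃ c ∈ Λ, embQ χ₁.1 ∈ c ∧ embQ χ₂.1 ∈ c
    · -- if the sum lands in σ, both summands are in σ (face property)
      have hboth : embQ (χ₁.1 + χ₂.1) ∈ σ → embQ χ₁.1 ∈ σ ∧ embQ χ₂.1 ∈ σ := by
        intro hs
        obtain ⟨τ, hτ, ht1, ht2⟩ := h
        have hface := (hΛ.2.2.2 σ hσ τ hτ).2
        have hmem : embQ χ₁.1 + embQ χ₂.1 ∈ σ ∩ τ :=
          ⟨by rw [← embQ_add]; exact hs, (hΛ.2.1 τ hτ).2.1 _ ht1 _ ht2⟩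
        have := hface.2.2 _ ht1 _ ht2 hmem
        exact ⟨this.1.1, this.2.1⟩
      rw [hmul χ₁ χ₂ h, hLx, hLx]; erw [hLx]
      by_cases h1 : embQ χ₁.1 ∈ σ
      · by_cases h2 : embQ χ₂.1 ∈ σ
        · have hs : embQ (χ₁.1 + χ₂.1) ∈ σ := by
            rw [embQ_add]; exact (hΛ.2.1 σ hσ).2.1 _ h1 _ h2
          show (if _ then _ else _) = _
          rw [if_pos hs]
          show _ = (if _ then _ else _) * (if _ then _ else _)
          rw [if_pos h1, if_pos h2, AddMonoidAlgebra.single_mul_single, one_mul]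
        · have hs : embQ (χ₁.1 + χ₂.1) ∉ σ := fun hs => h2 (hboth hs).2
          show (if _ then _ else _) = _ * (if _ then _ else _)
          rw [if_neg hs, if_neg h2, mul_zero]
      · have hs : embQ (χ₁.1 + χ₂.1) ∉ σ := fun hs => h1 (hboth hs).1
        show (if _ then _ else _) = (if _ then _ else _) * _
        rw [if_neg hs, if_neg h1, zero_mul]
    · rw [hmul0 χ₁ χ₂ h, map_zero, hLx, hLx]
      have hnot : ¬(embQ χ₁.1 ∈ σ ∧ embQ χ₂.1 ∈ σ) := fun ⟨a, b⟩ => h ⟨σ, hσ, a, b⟩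
      by_cases h1 : embQ χ₁.1 ∈ σ
      · have h2 : embQ χ₂.1 ∉ σ := fun h2 => hnot ⟨h1, h2⟩
        show (0 : A) = _ * (if _ then _ else _)
        rw [if_neg h2, mul_zero]
      · show (0 : A) = (if _ then _ else _) * _
        rw [if_neg h1, zero_mul]
  -- full multiplicativity by linearity (two rounds of `Basis.ext`)
  have step1 : ∀ (σ : Λ) (χ₂ : QLat Λ) (a : C), L σ (a * x χ₂) = L σ a * L σ (x χ₂) := by
    intro σ χ₂ a
    have h : (L σ).comp (LinearMap.mulRight k (x χ₂))
        = (LinearMap.mulRight k (L σ (x χ₂))).comp (L σ) :=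
      Module.Basis.ext x (fun χ₁ => by
        simp only [LinearMap.comp_apply, LinearMap.mulRight_apply]
        exact key σ χ₁ χ₂)
    have := DFunLike.congr_fun h a
    simpa only [LinearMap.comp_apply, LinearMap.mulRight_apply] using this
  have hmul' : ∀ (σ : Λ) (a b : C), L σ (a * b) = L σ a * L σ b := by
    intro σ a b
    have h : (L σ).comp (LinearMap.mulLeft k a)
        = (LinearMap.mulLeft k (L σ a)).comp (L σ) :=
      Module.Basis.ext x (fun χ₂ => by
        simp only [LinearMap.comp_apply, LinearMap.mulLeft_apply]
        exact step1 σ χ₂ a)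
    have := DFunLike.congr_fun h b
    simpa only [LinearMap.comp_apply, LinearMap.mulLeft_apply] using this
  have embQ_zero : embQ (0 : Fin n → ℤ) = 0 := by funext i; simp [embQ]
  have hone' : ∀ σ : Λ, L σ (1 : C) = 1 := by
    rintro ⟨σ, hσ⟩
    have h0σ : embQ (0 : Fin n → ℤ) ∈ σ := by rw [embQ_zero]; exact (hΛ.2.1 σ hσ).1
    have h0 : embQ (0 : Fin n → ℤ) ∈ ⋃₀ Λ := ⟨σ, hσ, h0σ⟩
    rw [← hone h0]; erw [hLx]
    show (if _ then _ else _) = _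
    rw [if_pos h0σ, AddMonoidAlgebra.one_def]
  -- assemble the ring homomorphism into the product
  let Rh : (σ : Λ) → C →+* A := fun σ =>
    { toFun := L σ
      map_one' := hone' σ
      map_mul' := hmul' σ
      map_zero' := map_zero _
      map_add' := map_add _ }
  let F : C →+* ((σ : Λ) → A) := Pi.ringHom Rh
  -- injectivity
  have hinj : Function.Injective F := by
    rw [injective_iff_map_eq_zero]
    intro a ha
    have hz : ∀ σ : Λ, L σ a = 0 := fun σ => congrFun ha σ
    have hrepr : x.repr a = 0 := by
      ext χ₀
      have hχ₀ : embQ χ₀.1 ∈ ⋃₀ Λ := χ₀.2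
      obtain ⟨σ, hσ, hσχ⟩ := hχ₀
      have h1 : (L ⟨σ, hσ⟩ a : A).coeff χ₀.1 = 0 := by
        rw [hz ⟨σ, hσ⟩]; rfl
      rw [Module.Basis.constr_apply, AddMonoidAlgebra.coeff_finsuppSum, Finsupp.sum_apply] at h1
      have h2 : ((x.repr a).sum fun χ c => (c • g ⟨σ, hσ⟩ χ).coeff χ₀.1)
          = (x.repr a).sum fun χ c => if χ₀ = χ then c else 0 := by
        apply Finsupp.sum_congr
        intro χ _
        rcases eq_or_ne χ₀ χ with rfl | hne
        · rw [if_pos rfl]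
          show ((x.repr a) χ₀ • if _ then _ else _ : A).coeff χ₀.1 = _
          rw [if_pos hσχ, AddMonoidAlgebra.coeff_smul_apply, AddMonoidAlgebra.coeff_single_apply,
            if_pos rfl, smul_eq_mul, mul_one]
        · rw [if_neg hne]
          have hne' : χ.1 ≠ χ₀.1 := fun he => hne (Subtype.ext he.symm)
          show ((x.repr a) χ • if _ then _ else _ : A).coeff χ₀.1 = 0
          by_cases hc : embQ χ.1 ∈ σ
          · rw [if_pos hc, AddMonoidAlgebra.coeff_smul_apply, AddMonoidAlgebra.coeff_single_apply,
              if_neg hne', smul_zero]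
          · rw [if_neg hc, smul_zero]; rfl
      rw [h2, Finsupp.sum_ite_self_eq] at h1
      simpa using h1
    have : a = x.repr.symm 0 := by rw [← hrepr]; simp
    simpa using this
  exact isReduced_of_injective F hinj
end
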